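/- arXiv:1201.3419 — 4 statements merged into one kernel-verified Lean document; each statement's English description precedes it below -/
import Mathlib

section
/- Under Assumptions 1 and 2, the Cramér root θ* is the root associated to the cycle increment: E_{x_0}[exp(θ* S_{τ(x_0)})] = 1. -/
open MeasureTheory ProbabilityTheory Real Filter
open scoped ENNReal NNReal

noncomputable section StmtAux

variable {S : Type} [Fintype S] [DecidableEq S]

/-- probability of avoiding `x0` for `n` steps, starting from `x`. -/
def mcAv (x0 : S) (B : S → S → ℝ≥0∞) : ℕ → S → ℝ≥0∞
  | 0 => fun _ => 1
  | n+1 => fun x => ∑ y, if y = x0 then 0 else B x y * mcAv x0 B n y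

/-- probability of hitting `x0` within `n` steps, starting from `x`. -/
def mcHit (x0 : S) (B : S → S → ℝ≥0∞) : ℕ → S → ℝ≥0∞
  | 0 => fun _ => 0
  | n+1 => fun x => B x x0 + ∑ y, if y = x0 then 0 else B x y * mcHit x0 B n y

/-- probability of hitting `x0` for the first time exactly at step `n`, from `x`. -/
def mcRet (x0 : S) (B : S → S → ℝ≥0∞) : ℕ → S → ℝ≥0∞
  | 0 => fun _ => 0
  | 1 => fun x => B x x0
  | n+2 => fun x => ∑ y, if y = x0 then 0 else B x y * mcRet x0 B (n+1) y

variable {x0 : S} {B : S → S → ℝ≥0∞}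

lemma mcRet_zero' (y : S) : mcRet x0 B 0 y = 0 := rfl

lemma mcRet_sum (n : ℕ) (x : S) :
    ∑ k ∈ Finset.range (n+1), mcRet x0 B k x = mcHit x0 B n x := by
  induction n generalizing x with
  | zero => simp [mcRet, mcHit]
  | succ n ih =>
    rw [Finset.sum_range_succ', Finset.sum_range_succ']
    have h2 : ∑ k ∈ Finset.range n, mcRet x0 B (k+1+1) x
        = ∑ y, if y = x0 then 0 else B x y * mcHit x0 B n y := by
      have : ∀ k ∈ Finset.range n, mcRet x0 B (k+1+1) x
          = ∑ y, if y = x0 then 0 else B x y * mcRet x0 B (k+1) y := fun k _ => rfl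
      rw [Finset.sum_congr rfl this, Finset.sum_comm]
      refine Finset.sum_congr rfl fun y _ => ?_
      by_cases hy : y = x0
      · simp [hy]
      · simp only [hy, if_false, ← Finset.mul_sum]
        congr 1
        rw [← ih y, Finset.sum_range_succ', mcRet_zero', add_zero]
    rw [h2, mcRet_zero', add_zero]
    show _ + mcRet x0 B 1 x = _
    show _ + B x x0 = _
    rw [add_comm]
    rfl

lemma mcAv_add_mcHit (hrow : ∀ x, ∑ y, B x y = 1) (n : ℕ) (x : S) :
    mcAv x0 B n x + mcHit x0 B n x = 1 := by
  induction n generalizing x with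
  | zero => simp [mcAv, mcHit]
  | succ n ih =>
    show (∑ y, if y = x0 then 0 else B x y * mcAv x0 B n y)
        + (B x x0 + ∑ y, if y = x0 then 0 else B x y * mcHit x0 B n y) = 1
    rw [← add_assoc, add_comm _ (B x x0), add_assoc, ← Finset.sum_add_distrib]
    have : ∑ y, ((if y = x0 then 0 else B x y * mcAv x0 B n y)
        + (if y = x0 then 0 else B x y * mcHit x0 B n y))
        = ∑ y, (if y = x0 then 0 else B x y) := by
      refine Finset.sum_congr rfl fun y _ => ?_
      by_cases hy : y = x0
      · simp [hy]
      · simp [hy, ← mul_add, ih y]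
    rw [this]
    have hsplit : ∀ y : S, B x y
        = (if y = x0 then B x y else 0) + (if y = x0 then 0 else B x y) := by
      intro y; by_cases h : y = x0 <;> simp [h]
    calc B x x0 + ∑ y, (if y = x0 then 0 else B x y)
        = (∑ y, if y = x0 then B x y else 0) + ∑ y, (if y = x0 then 0 else B x y) := by
          rw [Finset.sum_ite_eq' Finset.univ x0 (B x)]; simp
      _ = ∑ y, B x y := by rw [← Finset.sum_add_distrib]; exact Finset.sum_congr rfl fun y _ => (hsplit y).symm
      _ = 1 := hrow x

end StmtAux

section MCext
variable {S : Type} [Fintype S] [DecidableEq S] {x0 : S} {B : S → S → ℝ≥0∞}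

lemma mcB_le_one (hrow : ∀ x, ∑ y, B x y = 1) (x y : S) : B x y ≤ 1 := by
  rw [← hrow x]
  exact Finset.single_le_sum (fun _ _ => zero_le) (Finset.mem_univ y)

lemma mcAv_le_one (hrow : ∀ x, ∑ y, B x y = 1) (n : ℕ) (x : S) : mcAv x0 B n x ≤ 1 := by
  induction n generalizing x with
  | zero => exact le_refl 1
  | succ n ih =>
    show (∑ y, if y = x0 then 0 else B x y * mcAv x0 B n y) ≤ 1
    rw [← hrow x]
    refine Finset.sum_le_sum fun y _ => ?_
    by_cases hy : y = x0
    · simp [hy]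
    · simp only [hy, if_false]
      calc B x y * mcAv x0 B n y ≤ B x y * 1 := mul_le_mul_right (ih y) _
        _ = B x y := mul_one _

lemma mcHit_le_one (hrow : ∀ x, ∑ y, B x y = 1) (n : ℕ) (x : S) : mcHit x0 B n x ≤ 1 := by
  calc mcHit x0 B n x ≤ mcAv x0 B n x + mcHit x0 B n x := le_add_self
    _ = 1 := mcAv_add_mcHit hrow n x

lemma mcHit_mono (x : S) : Monotone (fun n => mcHit x0 B n x) := by
  have key : ∀ n x, mcHit x0 B n x ≤ mcHit x0 B (n+1) x := by
    intro n
    induction n with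
    | zero => intro x; exact zero_le
    | succ n ih =>
      intro x
      show B x x0 + _ ≤ B x x0 + _
      refine add_le_add_right (Finset.sum_le_sum fun y _ => ?_) _
      by_cases hy : y = x0
      · simp [hy]
      · simp only [hy, if_false]
        exact mul_le_mul_right (ih y) _
  exact monotone_nat_of_le_succ (fun n => key n x)

lemma mcAv_comp {m : ℕ} {c : ℝ≥0∞} (hm : ∀ y, mcAv x0 B m y ≤ c) :
    ∀ n x, mcAv x0 B (n + m) x ≤ c * mcAv x0 B n x := by
  intro n
  induction n with
  | zero => intro x; simpa [mcAv] using hm x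
  | succ n ih =>
    intro x
    have : n + 1 + m = (n + m) + 1 := by omega
    rw [this]
    show (∑ y, if y = x0 then 0 else B x y * mcAv x0 B (n + m) y) ≤ _
    have : c * mcAv x0 B (n+1) x = ∑ y, if y = x0 then 0 else B x y * (c * mcAv x0 B n y) := by
      show c * (∑ y, if y = x0 then 0 else B x y * mcAv x0 B n y) = _
      rw [Finset.mul_sum]
      refine Finset.sum_congr rfl fun y _ => ?_
      by_cases hy : y = x0 <;> simp [hy] <;> ring
    rw [this]
    refine Finset.sum_le_sum fun y _ => ?_
    by_cases hy : y = x0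
    · simp [hy]
    · simp only [hy, if_false]
      exact mul_le_mul_right (ih y) _

lemma mcAv_pow {N : ℕ} {c : ℝ≥0∞} (hN : ∀ y, mcAv x0 B N y ≤ c) :
    ∀ (m : ℕ) (x : S), mcAv x0 B (m * N) x ≤ c ^ m := by
  intro m
  induction m with
  | zero => intro x; simp [mcAv]
  | succ m ih =>
    intro x
    have : (m + 1) * N = m * N + N := by ring
    rw [this, pow_succ, mul_comm (c ^ m) c]
    calc mcAv x0 B (m * N + N) x ≤ c * mcAv x0 B (m * N) x := mcAv_comp hN _ x
      _ ≤ c * c ^ m := mul_le_mul_right (ih x) c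

lemma mcHit_path (hrow : ∀ x, ∑ y, B x y = 1) :
    ∀ n, 1 ≤ n → ∀ w : ℕ → S, w n = x0 →
      (∏ i ∈ Finset.range n, B (w i) (w (i+1))) ≤ mcHit x0 B n (w 0) := by
  intro n
  induction n with
  | zero => omega
  | succ n ih =>
    intro _ w hw
    rcases Nat.eq_zero_or_pos n with hn | hn
    · subst hn
      simp only [zero_add, Finset.prod_range_one]
      rw [hw]
      exact le_add_right (le_refl _)
    · have hprod : (∏ i ∈ Finset.range (n+1), B (w i) (w (i+1)))
          = (∏ i ∈ Finset.range n, B (w (i+1)) (w (i+2))) * B (w 0) (w 1) := by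
        rw [Finset.prod_range_succ']
      have ihw := ih hn (fun i => w (i+1)) hw
      by_cases h1 : w 1 = x0
      · have hle : (∏ i ∈ Finset.range n, B (w (i+1)) (w (i+2))) ≤ 1 :=
          Finset.prod_le_one (fun _ _ => zero_le) (fun i _ => mcB_le_one hrow _ _)
        calc (∏ i ∈ Finset.range (n+1), B (w i) (w (i+1)))
            ≤ 1 * B (w 0) (w 1) := by rw [hprod]; exact mul_le_mul_left hle _
          _ = B (w 0) x0 := by rw [one_mul, h1]
          _ ≤ mcHit x0 B (n+1) (w 0) := le_add_right (le_refl _)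
      · have hterm : B (w 0) (w 1) * mcHit x0 B n (w 1)
            ≤ ∑ y, if y = x0 then 0 else B (w 0) y * mcHit x0 B n y := by
          have : B (w 0) (w 1) * mcHit x0 B n (w 1)
              = if w 1 = x0 then 0 else B (w 0) (w 1) * mcHit x0 B n (w 1) := by simp [h1]
          rw [this]
          exact Finset.single_le_sum (f := fun y => if y = x0 then 0 else B (w 0) y * mcHit x0 B n y)
            (fun _ _ => zero_le) (Finset.mem_univ (w 1))
        calc (∏ i ∈ Finset.range (n+1), B (w i) (w (i+1)))
            ≤ mcHit x0 B n (w 1) * B (w 0) (w 1) := by rw [hprod]; exact mul_le_mul_left ihw _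
          _ = B (w 0) (w 1) * mcHit x0 B n (w 1) := mul_comm _ _
          _ ≤ ∑ y, if y = x0 then 0 else B (w 0) y * mcHit x0 B n y := hterm
          _ ≤ mcHit x0 B (n+1) (w 0) := le_add_self

end MCext

section MCirr
set_option linter.unusedSectionVars false
variable {S : Type} [Fintype S] [DecidableEq S] {x0 : S} {B : S → S → ℝ≥0∞}

lemma kpow_nonneg {K : Matrix S S ℝ} (hKnn : ∀ x y, 0 ≤ K x y) (n : ℕ) :
    ∀ x y, 0 ≤ (K ^ n) x y := by
  induction n with
  | zero => intro x y; rw [pow_zero]; by_cases h : x = y <;> simp [Matrix.one_apply, h]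
  | succ n ih =>
    intro x y
    rw [pow_succ, Matrix.mul_apply]
    exact Finset.sum_nonneg fun z _ => mul_nonneg (ih x z) (hKnn z y)

lemma kpow_path {K : Matrix S S ℝ} (hKnn : ∀ x y, 0 ≤ K x y) :
    ∀ n x y, 0 < (K ^ n) x y →
      ∃ w : ℕ → S, w 0 = x ∧ w n = y ∧ ∀ i < n, 0 < K (w i) (w (i+1)) := by
  intro n
  induction n with
  | zero =>
    intro x y h
    rw [pow_zero] at h
    by_cases hxy : x = y
    · exact ⟨fun _ => x, rfl, hxy ▸ rfl, fun i hi => absurd hi (by omega)⟩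
    · rw [Matrix.one_apply_ne hxy] at h; exact absurd h (lt_irrefl 0)
  | succ n ih =>
    intro x y h
    rw [pow_succ, Matrix.mul_apply] at h
    have hz : ∃ z, 0 < (K ^ n) x z * K z y := by
      by_contra hc
      push_neg at hc
      have : (∑ z, (K ^ n) x z * K z y) ≤ 0 := Finset.sum_nonpos fun z _ => hc z
      linarith
    obtain ⟨z, hz⟩ := hz
    have h1 : 0 < (K ^ n) x z := by
      rcases lt_or_ge 0 ((K ^ n) x z) with h' | h'
      · exact h'
      · nlinarith [hKnn z y, kpow_nonneg hKnn n x z]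
    have h2 : 0 < K z y := by nlinarith [kpow_nonneg hKnn n x z]
    obtain ⟨w, hw0, hwn, hwstep⟩ := ih x z h1
    refine ⟨fun i => if i ≤ n then w i else y, by simpa using hw0, by simp, ?_⟩
    intro i hi
    show 0 < K (if i ≤ n then w i else y) (if i + 1 ≤ n then w (i+1) else y)
    rcases Nat.lt_or_ge i n with h' | h'
    · have e1 : (if i ≤ n then w i else y) = w i := by simp [Nat.le_of_lt h']
      have e2 : (if i + 1 ≤ n then w (i+1) else y) = w (i+1) := by
        simp [Nat.succ_le_of_lt h']
      rw [e1, e2]; exact hwstep i h'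
    · have hin : i = n := by omega
      have e1 : (if i ≤ n then w i else y) = z := by rw [if_pos (by omega), hin, hwn]
      have e2 : (if i + 1 ≤ n then w (i+1) else y) = y := by rw [if_neg (by omega)]
      rw [e1, e2]; exact h2

lemma exists_hit_pos {K : Matrix S S ℝ} (hrow : ∀ x, ∑ y, B x y = 1)
    (hKnn : ∀ x y, 0 ≤ K x y) (hKrow : ∀ x, ∑ y, K x y = 1)
    (hKirr : ∀ x y, ∃ n : ℕ, 0 < (K ^ n) x y)
    (hBpos : ∀ a b, 0 < K a b → B a b ≠ 0) :
    ∀ y, ∃ n, 1 ≤ n ∧ mcHit x0 B n y ≠ 0 := by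
  have prodpos : ∀ (n : ℕ) (w : ℕ → S), (∀ i < n, 0 < K (w i) (w (i+1))) →
      (∏ i ∈ Finset.range n, B (w i) (w (i+1))) ≠ 0 := by
    intro n w hstep
    rw [Finset.prod_ne_zero_iff]
    intro i hi
    exact hBpos _ _ (hstep i (Finset.mem_range.1 hi))
  have main : ∀ (n : ℕ) (w : ℕ → S), 1 ≤ n → w n = x0 → (∀ i < n, 0 < K (w i) (w (i+1))) →
      mcHit x0 B n (w 0) ≠ 0 := by
    intro n w hn hwn hstep
    have h1 := mcHit_path hrow n hn w hwn
    have h2 := prodpos n w hstep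
    intro h0
    rw [h0] at h1
    exact h2 (le_antisymm h1 zero_le)
  intro y
  by_cases hy : y = x0
  · subst hy
    have hz : ∃ z, 0 < K y z := by
      by_contra hc
      push_neg at hc
      have : (∑ z, K y z) ≤ 0 := Finset.sum_nonpos fun z _ => hc z
      rw [hKrow y] at this; linarith
    obtain ⟨z, hz⟩ := hz
    by_cases hzy : z = y
    · refine ⟨1, le_refl 1, ?_⟩
      have : (fun _ : ℕ => y) 1 = y := rfl
      refine main 1 (fun _ => y) (le_refl 1) rfl fun i _ => ?_
      rw [← hzy] at hz ⊢; exact hz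
    · obtain ⟨n, hn⟩ := hKirr z y
      have hn1 : n ≠ 0 := by
        intro h; subst h; rw [pow_zero, Matrix.one_apply_ne hzy] at hn; exact lt_irrefl 0 hn
      obtain ⟨w, hw0, hwn, hwstep⟩ := kpow_path hKnn n z y hn
      set w' : ℕ → S := fun i => if i = 0 then y else w (i - 1) with hw'
      refine ⟨n + 1, by omega, ?_⟩
      have hww : w' 0 = y := rfl
      rw [← hww]
      refine main (n+1) w' (by omega) (by simp [hw', hwn]) ?_
      intro i hi
      rcases Nat.eq_zero_or_pos i with h0 | h0
      · subst h0; simpa [hw', hw0] using hz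
      · have e1 : w' i = w (i - 1) := by simp [hw', Nat.pos_iff_ne_zero.1 h0]
        have e2 : w' (i + 1) = w i := by simp [hw']
        rw [e1, e2]
        have : i - 1 + 1 = i := by omega
        rw [← this]
        exact hwstep (i-1) (by omega)
  · obtain ⟨n, hn⟩ := hKirr y x0
    have hn1 : n ≠ 0 := by
      intro h; subst h; rw [pow_zero, Matrix.one_apply_ne hy] at hn; exact lt_irrefl 0 hn
    obtain ⟨w, hw0, hwn, hwstep⟩ := kpow_path hKnn n y x0 hn
    exact ⟨n, by omega, hw0 ▸ main n w (by omega) hwn hwstep⟩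

end MCirr

section MClimit
set_option linter.unusedSectionVars false
variable {S : Type} [Fintype S] [DecidableEq S] [Nonempty S] {x0 : S} {B : S → S → ℝ≥0∞}

lemma mcAv_iInf (hrow : ∀ x, ∑ y, B x y = 1)
    (hpos : ∀ y, ∃ n, 1 ≤ n ∧ mcHit x0 B n y ≠ 0) (x : S) :
    ⨅ n, mcAv x0 B n x = 0 := by
  classical
  set nf : S → ℕ := fun y => (hpos y).choose with hnf
  set N : ℕ := Finset.univ.sup nf with hN
  have hhitN : ∀ y, mcHit x0 B N y ≠ 0 := by
    intro y
    have h1 : nf y ≤ N := Finset.le_sup (Finset.mem_univ y)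
    have h2 : mcHit x0 B (nf y) y ≠ 0 := (hpos y).choose_spec.2
    intro h0
    exact h2 (le_antisymm (h0 ▸ mcHit_mono y h1) zero_le)
  set δ : ℝ≥0∞ := Finset.univ.inf' Finset.univ_nonempty (fun y => mcHit x0 B N y) with hδ
  have hδpos : δ ≠ 0 := by
    rw [hδ]
    intro h0
    obtain ⟨y, _, hy⟩ := Finset.exists_mem_eq_inf' Finset.univ_nonempty (fun y => mcHit x0 B N y)
    exact hhitN y (by rw [← hy, ← h0])
  set c : ℝ≥0∞ := 1 - δ with hc
  have hc1 : c < 1 := ENNReal.sub_lt_self ENNReal.one_ne_top one_ne_zero hδpos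
  have havN : ∀ y, mcAv x0 B N y ≤ c := by
    intro y
    have h1 : mcAv x0 B N y = 1 - mcHit x0 B N y :=
      ENNReal.eq_sub_of_add_eq (lt_of_le_of_lt (mcHit_le_one hrow N y) ENNReal.one_lt_top).ne
        (mcAv_add_mcHit hrow N y)
    rw [h1, hc]
    exact tsub_le_tsub_left (Finset.inf'_le _ (Finset.mem_univ y)) 1
  have hconv : Tendsto (fun m : ℕ => c ^ m) atTop (nhds 0) :=
    ENNReal.tendsto_pow_atTop_nhds_zero_of_lt_one hc1
  have hanti : Antitone (fun m : ℕ => c ^ m) := fun m n h =>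
    pow_le_pow_right_of_le_one' hc1.le h
  have hiInfc : ⨅ m, c ^ m = 0 := tendsto_nhds_unique (tendsto_atTop_iInf hanti) hconv
  refine le_antisymm ?_ zero_le
  rw [← hiInfc]
  refine le_iInf fun m => iInf_le_of_le (m * N) ?_
  exact mcAv_pow havN m x

lemma mcRet_tsum (hrow : ∀ x, ∑ y, B x y = 1)
    (hpos : ∀ y, ∃ n, 1 ≤ n ∧ mcHit x0 B n y ≠ 0) :
    ∑' k, mcRet x0 B k x0 = 1 := by
  have hhit : ⨆ n, mcHit x0 B n x0 = 1 := by
    have h1 : ∀ n, mcHit x0 B n x0 = 1 - mcAv x0 B n x0 := by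
      intro n
      refine ENNReal.eq_sub_of_add_eq
        (lt_of_le_of_lt (mcAv_le_one hrow n x0) ENNReal.one_lt_top).ne ?_
      rw [add_comm]; exact mcAv_add_mcHit hrow n x0
    calc ⨆ n, mcHit x0 B n x0 = ⨆ n, (1 - mcAv x0 B n x0) := by simp only [h1]
      _ = 1 - ⨅ n, mcAv x0 B n x0 := (ENNReal.sub_iInf).symm
      _ = 1 := by rw [mcAv_iInf hrow hpos x0, tsub_zero]
  rw [ENNReal.tsum_eq_iSup_nat]
  refine le_antisymm ?_ ?_
  · refine iSup_le fun n => ?_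
    rcases Nat.eq_zero_or_pos n with h0 | h0
    · subst h0; simp
    · obtain ⟨m, rfl⟩ := Nat.exists_eq_add_of_le h0
      rw [add_comm] at *
      rw [mcRet_sum]
      rw [← hhit]
      exact le_iSup (fun n => mcHit x0 B n x0) m
  · rw [← hhit]
    refine iSup_le fun n => ?_
    rw [← mcRet_sum n x0]
    exact le_iSup (fun n => ∑ k ∈ Finset.range n, mcRet x0 B k x0) (n+1)
end MClimit

section Paths
set_option linter.unusedSectionVars false
variable {S : Type} [Fintype S] [DecidableEq S]

/-- the trajectory determined by start `x` and the next `k` states `v`. -/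
def pth (x : S) (k : ℕ) (v : Fin k → S) : ℕ → S :=
  fun i => if h : 1 ≤ i ∧ i ≤ k then v ⟨i-1, by omega⟩ else x

lemma pth_zero (x : S) (k : ℕ) (v : Fin k → S) : pth x k v 0 = x := rfl

lemma pth_pos (x : S) (k : ℕ) (v : Fin k → S) (i : ℕ) (h1 : 1 ≤ i) (h2 : i ≤ k) :
    pth x k v i = v ⟨i-1, by omega⟩ := dif_pos ⟨h1, h2⟩

lemma pth_cons_succ (x y : S) (k : ℕ) (w : Fin k → S) (i : ℕ) (hi : i ≤ k) :
    pth x (k+1) (Fin.cons y w : Fin (k+1) → S) (i+1) = pth y k w i := by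
  rcases Nat.eq_zero_or_pos i with h0 | h0
  · subst h0
    rw [pth_pos x (k+1) _ 1 (le_refl 1) (by omega)]
    exact Fin.cons_zero (α := fun _ : Fin (k+1) => S) y w
  · rw [pth_pos x (k+1) _ (i+1) (by omega) (by omega), pth_pos y k w i h0 hi]
    have : (⟨i+1-1, by omega⟩ : Fin (k+1)) = Fin.succ ⟨i-1, by omega⟩ := by
      ext; simp; omega
    rw [this, Fin.cons_succ]

lemma pth_cons_one (x y : S) (k : ℕ) (w : Fin k → S) :
    pth x (k+1) (Fin.cons y w : Fin (k+1) → S) 1 = y :=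
  pth_cons_succ x y k w 0 (by omega)

/-- weight of a path of length `k` starting at `x`. -/
noncomputable def pwt (B : S → S → ℝ≥0∞) (x : S) (k : ℕ) (v : Fin k → S) : ℝ≥0∞ :=
  ∏ i ∈ Finset.range k, B (pth x k v i) (pth x k v (i+1))

lemma pwt_cons (B : S → S → ℝ≥0∞) (x y : S) (k : ℕ) (w : Fin k → S) :
    pwt B x (k+1) (Fin.cons y w : Fin (k+1) → S) = B x y * pwt B y k w := by
  unfold pwt
  rw [Finset.prod_range_succ']
  have h0 : B (pth x (k+1) (Fin.cons y w : Fin (k+1) → S) 0)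
      (pth x (k+1) (Fin.cons y w : Fin (k+1) → S) (0+1)) = B x y := by
    rw [pth_zero]
    congr 1
  have hrest : ∀ i ∈ Finset.range k,
      B (pth x (k+1) (Fin.cons y w : Fin (k+1) → S) (i+1))
        (pth x (k+1) (Fin.cons y w : Fin (k+1) → S) (i+1+1))
      = B (pth y k w i) (pth y k w (i+1)) := by
    intro i hi
    have hik : i < k := Finset.mem_range.1 hi
    rw [pth_cons_succ x y k w i (by omega), pth_cons_succ x y k w (i+1) (by omega)]
  rw [Finset.prod_congr rfl hrest, h0, mul_comm]

/-- first-return-to-`x0`-at-time-`k` paths. -/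
def admF (x0 : S) (k : ℕ) : Finset (Fin k → S) :=
  Finset.univ.filter (fun v => (∀ j : Fin k, (j : ℕ) + 1 < k → v j ≠ x0)
    ∧ ∀ j : Fin k, (j : ℕ) + 1 = k → v j = x0)

/-- `x0`-avoiding paths. -/
def avF (x0 : S) (k : ℕ) : Finset (Fin k → S) :=
  Finset.univ.filter (fun v => ∀ j : Fin k, v j ≠ x0)

lemma sum_cons_split {k : ℕ} (F : (Fin (k+1) → S) → ℝ≥0∞) (p : (Fin (k+1) → S) → Prop)
    [DecidablePred p] :
    ∑ v ∈ Finset.univ.filter p, F v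
      = ∑ y : S, ∑ w : Fin k → S,
        (if p (Fin.cons y w : Fin (k+1) → S) then F (Fin.cons y w : Fin (k+1) → S) else 0) := by
  rw [Finset.sum_filter]
  rw [← (Fin.consEquiv (fun _ : Fin (k+1) => S)).sum_comp
    (fun v => if p v then F v else 0)]
  rw [Fintype.sum_prod_type]
  rfl

lemma avSum (x0 : S) (B : S → S → ℝ≥0∞) :
    ∀ (k : ℕ) (x : S), ∑ v ∈ avF x0 k, pwt B x k v = mcAv x0 B k x := by
  intro k
  induction k with
  | zero =>
    intro x
    rw [avF]
    simp [pwt, mcAv]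
  | succ k ih =>
    intro x
    rw [avF, sum_cons_split]
    show (∑ y : S, ∑ w : Fin k → S, _) = ∑ y, if y = x0 then 0 else B x y * mcAv x0 B k y
    refine Finset.sum_congr rfl fun y _ => ?_
    have hsplit : ∀ w : Fin k → S,
        (∀ j : Fin (k+1), (Fin.cons y w : Fin (k+1) → S) j ≠ x0)
          ↔ (y ≠ x0 ∧ ∀ j : Fin k, w j ≠ x0) := by
      intro w
      have hc0 : (Fin.cons y w : Fin (k+1) → S) 0 = y :=
        Fin.cons_zero (α := fun _ : Fin (k+1) => S) y w
      have hcs : ∀ j : Fin k, (Fin.cons y w : Fin (k+1) → S) j.succ = w j :=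
        fun j => Fin.cons_succ (α := fun _ : Fin (k+1) => S) y w j
      constructor
      · intro h
        refine ⟨hc0 ▸ h 0, fun j => hcs j ▸ h j.succ⟩
      · rintro ⟨h1, h2⟩ j
        induction j using Fin.cases with
        | zero => rwa [hc0]
        | succ j => rw [hcs]; exact h2 j
    have hre : ∀ w : Fin k → S,
        (if (∀ j : Fin (k+1), (Fin.cons y w : Fin (k+1) → S) j ≠ x0)
          then pwt B x (k+1) (Fin.cons y w : Fin (k+1) → S) else 0)
        = if (y ≠ x0 ∧ ∀ j : Fin k, w j ≠ x0) then B x y * pwt B y k w else 0 :=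
      fun w => if_congr (hsplit w) (pwt_cons B x y k w) rfl
    rw [Finset.sum_congr rfl fun w _ => hre w]
    by_cases hy : y = x0
    · rw [if_pos hy]
      exact Finset.sum_eq_zero fun w _ => if_neg (fun h => h.1 hy)
    · rw [if_neg hy, ← ih y, avF, Finset.sum_filter, Finset.mul_sum]
      refine Finset.sum_congr rfl fun w _ => ?_
      by_cases hw : ∀ j : Fin k, w j ≠ x0
      · rw [if_pos ⟨hy, hw⟩, if_pos hw]
      · rw [if_neg (fun h => hw h.2), if_neg hw, mul_zero]

lemma retSum (x0 : S) (B : S → S → ℝ≥0∞) :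
    ∀ (k : ℕ) (x : S), ∑ v ∈ admF x0 (k+1), pwt B x (k+1) v = mcRet x0 B (k+1) x := by
  intro k
  induction k with
  | zero =>
    intro x
    rw [admF, Finset.sum_filter]
    rw [Fintype.sum_eq_single (fun _ : Fin 1 => x0)]
    · have hc : (∀ j : Fin 1, (j : ℕ) + 1 < 1 → (fun _ : Fin 1 => x0) j ≠ x0)
          ∧ ∀ j : Fin 1, (j : ℕ) + 1 = 1 → (fun _ : Fin 1 => x0) j = x0 :=
        ⟨fun j hj => by omega, fun j _ => rfl⟩
      rw [if_pos hc]
      show pwt B x 1 _ = B x x0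
      rw [pwt, Finset.prod_range_one, pth_zero, pth_pos x _ _ 1 (le_refl 1) (by omega)]
    · intro v hv
      rw [if_neg]
      rintro ⟨-, h2⟩
      refine hv (funext fun j => ?_)
      exact h2 j (by omega)
  | succ k ih =>
    intro x
    rw [admF, sum_cons_split]
    show (∑ y : S, ∑ w : Fin (k+1) → S, _)
      = ∑ y, if y = x0 then 0 else B x y * mcRet x0 B (k+1) y
    refine Finset.sum_congr rfl fun y _ => ?_
    have hsplit : ∀ w : Fin (k+1) → S,
        ((∀ j : Fin (k+2), (j : ℕ) + 1 < k+2 → (Fin.cons y w : Fin (k+2) → S) j ≠ x0)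
          ∧ ∀ j : Fin (k+2), (j : ℕ) + 1 = k+2 → (Fin.cons y w : Fin (k+2) → S) j = x0)
        ↔ (y ≠ x0 ∧ ((∀ j : Fin (k+1), (j : ℕ) + 1 < k+1 → w j ≠ x0)
          ∧ ∀ j : Fin (k+1), (j : ℕ) + 1 = k+1 → w j = x0)) := by
      intro w
      have hc0 : (Fin.cons y w : Fin (k+2) → S) 0 = y :=
        Fin.cons_zero (α := fun _ : Fin (k+2) => S) y w
      have hcs : ∀ j : Fin (k+1), (Fin.cons y w : Fin (k+2) → S) j.succ = w j :=
        fun j => Fin.cons_succ (α := fun _ : Fin (k+2) => S) y w j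
      constructor
      · rintro ⟨h1, h2⟩
        refine ⟨?_, fun j hj => ?_, fun j hj => ?_⟩
        · have := h1 0 (by simp)
          rwa [hc0] at this
        · have := h1 j.succ (by rw [Fin.val_succ]; omega)
          rwa [hcs] at this
        · have := h2 j.succ (by rw [Fin.val_succ]; omega)
          rwa [hcs] at this
      · rintro ⟨h1, h2, h3⟩
        constructor
        · intro j
          induction j using Fin.cases with
          | zero => intro _; rwa [hc0]
          | succ j =>
            intro hj
            rw [hcs]
            refine h2 j ?_
            rw [Fin.val_succ] at hj
            omega
        · intro j
          induction j using Fin.cases with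
          | zero =>
            intro hj
            rw [Fin.val_zero] at hj
            omega
          | succ j =>
            intro hj
            rw [hcs]
            refine h3 j ?_
            rw [Fin.val_succ] at hj
            omega
    have hre : ∀ w : Fin (k+1) → S,
        (if ((∀ j : Fin (k+2), (j : ℕ) + 1 < k+2 → (Fin.cons y w : Fin (k+2) → S) j ≠ x0)
            ∧ ∀ j : Fin (k+2), (j : ℕ) + 1 = k+2 → (Fin.cons y w : Fin (k+2) → S) j = x0)
          then pwt B x (k+2) (Fin.cons y w : Fin (k+2) → S) else 0)
        = if (y ≠ x0 ∧ ((∀ j : Fin (k+1), (j : ℕ) + 1 < k+1 → w j ≠ x0)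
            ∧ ∀ j : Fin (k+1), (j : ℕ) + 1 = k+1 → w j = x0))
          then B x y * pwt B y (k+1) w else 0 :=
      fun w => if_congr (hsplit w) (pwt_cons B x y (k+1) w) rfl
    rw [Finset.sum_congr rfl fun w _ => hre w]
    by_cases hy : y = x0
    · rw [if_pos hy]
      exact Finset.sum_eq_zero fun w _ => if_neg (fun h => h.1 hy)
    · rw [if_neg hy, ← ih y, admF, Finset.sum_filter, Finset.mul_sum]
      refine Finset.sum_congr rfl fun w _ => ?_
      by_cases hw : (∀ j : Fin (k+1), (j : ℕ) + 1 < k+1 → w j ≠ x0)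
          ∧ ∀ j : Fin (k+1), (j : ℕ) + 1 = k+1 → w j = x0
      · rw [if_pos ⟨hy, hw⟩, if_pos hw]
      · rw [if_neg (fun h => hw h.2), if_neg hw, mul_zero]
end Paths

section MeasHelp
open ProbabilityTheory MeasureTheory

lemma lintegral_indep_mul {Ω α β : Type} [MeasurableSpace Ω] [MeasurableSpace α]
    [MeasurableSpace β]
    (P : Measure Ω) [IsProbabilityMeasure P] {f : Ω → α} {g : Ω → β}
    (hf : Measurable f) (hg : Measurable g) (h : IndepFun f g P)
    {F : α → ℝ≥0∞} {G : β → ℝ≥0∞} (hF : Measurable F) (hG : Measurable G) :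
    ∫⁻ ω, F (f ω) * G (g ω) ∂P = (∫⁻ ω, F (f ω) ∂P) * ∫⁻ ω, G (g ω) ∂P := by
  have hmap : Measure.map (fun ω => (f ω, g ω)) P = (Measure.map f P).prod (Measure.map g P) :=
    (indepFun_iff_map_prod_eq_prod_map_map hf.aemeasurable hg.aemeasurable).1 h
  have hFG : Measurable (fun p : α × β => F p.1 * G p.2) :=
    (hF.comp measurable_fst).mul (hG.comp measurable_snd)
  calc ∫⁻ ω, F (f ω) * G (g ω) ∂P
      = ∫⁻ p : α × β, F p.1 * G p.2 ∂(Measure.map (fun ω => (f ω, g ω)) P) := by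
        rw [lintegral_map hFG (hf.prodMk hg)]
    _ = (∫⁻ a, F a ∂(Measure.map f P)) * ∫⁻ b, G b ∂(Measure.map g P) := by
        rw [hmap]; exact lintegral_prod_mul hF.aemeasurable hG.aemeasurable
    _ = _ := by rw [lintegral_map hF hf, lintegral_map hG hg]

/-- product formula for lintegrals of finitely many independent `ℝ≥0∞`-valued rvs. -/
lemma lintegral_prod_indep {Ω : Type} [MeasurableSpace Ω]
    (P : Measure Ω) [IsProbabilityMeasure P] {Y : ℕ → Ω → ℝ≥0∞}
    (hY : iIndepFun Y P) (hYm : ∀ i, Measurable (Y i)) (k : ℕ) :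
    ∫⁻ ω, ∏ i ∈ Finset.range k, Y i ω ∂P = ∏ i ∈ Finset.range k, ∫⁻ ω, Y i ω ∂P := by
  induction k with
  | zero => simp
  | succ k ih =>
    have hind : IndepFun (∏ j ∈ Finset.range k, Y j) (Y k) P :=
      hY.indepFun_prod_range_succ hYm k
    have hPm : Measurable (fun ω => ∏ j ∈ Finset.range k, Y j ω) :=
      Finset.measurable_prod _ (fun i _ => hYm i)
    have hind' : IndepFun (fun ω => ∏ j ∈ Finset.range k, Y j ω) (Y k) P :=
      hind.congr (Filter.Eventually.of_forall fun ω => Finset.prod_apply ω _ _)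
        (Filter.EventuallyEq.refl _ _)
    have key := lintegral_indep_mul P hPm (hYm k) hind'
      (measurable_id : Measurable (id : ℝ≥0∞ → ℝ≥0∞))
      (measurable_id : Measurable (id : ℝ≥0∞ → ℝ≥0∞))
    simp only [id_eq] at key
    calc ∫⁻ ω, ∏ i ∈ Finset.range (k+1), Y i ω ∂P
        = ∫⁻ ω, (∏ i ∈ Finset.range k, Y i ω) * Y k ω ∂P :=
          lintegral_congr fun ω => Finset.prod_range_succ _ _
      _ = (∫⁻ ω, ∏ i ∈ Finset.range k, Y i ω ∂P) * ∫⁻ ω, Y k ω ∂P := key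
      _ = _ := by rw [ih, Finset.prod_range_succ]
end MeasHelp
lemma prod_ratio (g : ℕ → ℝ≥0∞) (hg0 : ∀ i, g i ≠ 0) (hgt : ∀ i, g i ≠ ⊤) (n : ℕ) :
    ∏ i ∈ Finset.range n, (g (i+1) * (g i)⁻¹) = g n * (g 0)⁻¹ := by
  induction n with
  | zero => rw [Finset.range_zero, Finset.prod_empty, ENNReal.mul_inv_cancel (hg0 0) (hgt 0)]
  | succ n ih =>
    rw [Finset.prod_range_succ, ih]
    calc g n * (g 0)⁻¹ * (g (n+1) * (g n)⁻¹)
        = g (n+1) * ((g n * (g n)⁻¹) * (g 0)⁻¹) := by ring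
      _ = g (n+1) * (g 0)⁻¹ := by rw [ENNReal.mul_inv_cancel (hg0 n) (hgt n), one_mul]


/-- Under Assumptions 1 and 2, the Cramér root `θ*` satisfies `E_{x₀}[exp(θ* S_{τ(x₀)})] = 1`,
where `τ(x₀) = inf{k ≥ 1 : X_k = x₀}` is the return time to the initial state. -/
theorem stmt_2
    {S : Type} [Fintype S] [DecidableEq S] [Nonempty S]
    [MeasurableSpace S] [MeasurableSingletonClass S]
    {Ω : Type} [mΩ : MeasurableSpace Ω] (P : Measure Ω) [IsProbabilityMeasure P]
    -- the transition matrix: stochastic and irreducible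
    (K : Matrix S S ℝ) (hKnn : ∀ x y, 0 ≤ K x y) (hKrow : ∀ x, ∑ y, K x y = 1)
    (hKirr : ∀ x y, ∃ n : ℕ, 0 < (K ^ n) x y)
    -- the modulating Markov chain, started at x0, and the i.i.d. drivers
    (X : ℕ → Ω → S) (hXmeas : ∀ n, Measurable (X n))
    (ξ η : ℕ → Ω → ℝ) (hξmeas : ∀ n, Measurable (ξ n)) (hηmeas : ∀ n, Measurable (η n))
    (x0 : S) (hX0 : ∀ᵐ ω ∂P, X 0 ω = x0)
    (hMarkov : ∀ (n : ℕ) (x : ℕ → S),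
      P {ω | ∀ i ≤ n + 1, X i ω = x i}
        = P {ω | ∀ i ≤ n, X i ω = x i} * ENNReal.ofReal (K (x n) (x (n + 1))))
    (hiid : ∀ n : ℕ, 1 ≤ n →
      Measure.map (fun ω => (ξ n ω, η n ω)) P = Measure.map (fun ω => (ξ 1 ω, η 1 ω)) P)
    (hindep : iIndepFun
      (fun (n : ℕ) (ω : Ω) => (ξ (n + 1) ω, η (n + 1) ω)) P)
    (hindX : IndepFun (fun ω (n : ℕ) => X n ω) (fun ω (n : ℕ) => (ξ (n + 1) ω, η (n + 1) ω)) P)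
    -- discount and reward rate functions (rewards nonnegative)
    (γ lam : S → ℝ → ℝ) (hγm : ∀ x, Measurable (γ x)) (hlamm : ∀ x, Measurable (lam x))
    (hlamnn : ∀ x v, 0 ≤ lam x v)
    -- the accumulated rate process S_n = Σ_{k=1}^n γ(X_k, ξ_k), S_0 = 0
    (Sp : ℕ → Ω → ℝ)
    (hSp : ∀ n ω, Sp n ω = ∑ k ∈ Finset.range n, γ (X (k + 1) ω) (ξ (k + 1) ω))
    -- Perron-Frobenius eigenfunctions u_θ > 0 and eigenvalue exp(ψ(θ)):
    -- u_θ(x) = E_x[exp(θ γ(X₁,ξ₁) - ψ(θ)) u_θ(X₁)] whenever the mgf is finite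
    (u : ℝ → S → ℝ) (ψ : ℝ → ℝ) (hupos : ∀ θ x, 0 < u θ x)
    (heig : ∀ θ : ℝ, (∀ x, Integrable (fun ω => exp (θ * γ x (ξ 1 ω))) P) →
      ∀ x : S, u θ x = ∑ y, K x y * ((∫ ω, exp (θ * γ y (ξ 1 ω)) ∂P) * exp (-ψ θ) * u θ y))
    -- Assumption 1: finite exponential moments in a neighborhood of the origin
    (hA1 : ∃ ε > (0 : ℝ), ∀ θ : ℝ, |θ| ≤ ε →
      ∀ x, Integrable (fun ω => exp (θ * γ x (ξ 1 ω))) P)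
    -- Assumption 2 (Cramér): ψ(θ*) = 0 for some θ* > 0 and ψ(θ) < ∞ for some θ > θ*
    (θs : ℝ) (hθspos : 0 < θs) (hψ0 : ψ θs = 0)
    (hA2 : ∃ θp > θs, ∀ θ ∈ Set.Icc (0 : ℝ) θp,
      ∀ x, Integrable (fun ω => exp (θ * γ x (ξ 1 ω))) P)
    :
    ∫⁻ ω, ENNReal.ofReal (exp (θs * Sp (sInf {k : ℕ | 1 ≤ k ∧ X k ω = x0}) ω)) ∂P = 1 := by
  classical
  obtain ⟨θp, hθp, hA2'⟩ := hA2
  have hint : ∀ x, Integrable (fun ω => exp (θs * γ x (ξ 1 ω))) P :=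
    hA2' θs ⟨le_of_lt hθspos, le_of_lt hθp⟩
  -- the mgf weights
  set mr : S → ℝ := fun y => ∫ ω, exp (θs * γ y (ξ 1 ω)) ∂P with hmr
  set m : S → ℝ≥0∞ := fun y => ∫⁻ ω, ENNReal.ofReal (exp (θs * γ y (ξ 1 ω))) ∂P with hmdef
  have hm_eq : ∀ y, m y = ENNReal.ofReal (mr y) := fun y =>
    (ofReal_integral_eq_lintegral_ofReal (hint y)
      (Filter.Eventually.of_forall fun ω => (exp_pos _).le)).symm
  have hmrpos : ∀ y, 0 < mr y := by
    intro y
    rcases lt_or_ge 0 (mr y) with h | h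
    · exact h
    have h0 : mr y = 0 := le_antisymm h (integral_nonneg fun ω => (exp_pos _).le)
    have hae := (integral_eq_zero_iff_of_nonneg (fun ω => (exp_pos _).le) (hint y)).1 h0
    have : ∀ᵐ ω ∂P, False := by
      filter_upwards [hae] with ω hω
      exact (exp_pos (θs * γ y (ξ 1 ω))).ne' hω
    obtain ⟨ω, hω⟩ := this.exists
    exact absurd hω not_false
  -- positive eigenvector weights
  set uu : S → ℝ≥0∞ := fun y => ENNReal.ofReal (u θs y) with huu
  have huu0 : ∀ y, uu y ≠ 0 := fun y => by
    simp [huu, ENNReal.ofReal_eq_zero, not_le, hupos θs y]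
  have huutop : ∀ y, uu y ≠ ⊤ := fun y => ENNReal.ofReal_ne_top
  -- two `ℝ≥0∞` transition kernels
  set BK : S → S → ℝ≥0∞ := fun x y => ENNReal.ofReal (K x y) with hBK
  set Q : S → S → ℝ≥0∞ := fun x y => ENNReal.ofReal (K x y) * m y * uu y * (uu x)⁻¹ with hQ
  have hBKrow : ∀ x, ∑ y, BK x y = 1 := by
    intro x
    show (∑ y, ENNReal.ofReal (K x y)) = 1
    rw [← ENNReal.ofReal_sum_of_nonneg (fun y _ => hKnn x y), hKrow x, ENNReal.ofReal_one]
  have hBKpos : ∀ a b, 0 < K a b → BK a b ≠ 0 := by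
    intro a b h
    simp [hBK, ENNReal.ofReal_eq_zero, not_le, h]
  -- eigen relation at θ*
  have heigr : ∀ x, u θs x = ∑ y, K x y * (mr y * u θs y) := by
    intro x
    have := heig θs hint x
    rw [hψ0, neg_zero, exp_zero] at this
    simpa [mul_one, hmr] using this
  have hQrow : ∀ x, ∑ y, Q x y = 1 := by
    intro x
    have h1 : ∀ y, Q x y = ENNReal.ofReal (K x y * (mr y * u θs y)) * (uu x)⁻¹ := by
      intro y
      show ENNReal.ofReal (K x y) * m y * uu y * (uu x)⁻¹ = _
      have huy : uu y = ENNReal.ofReal (u θs y) := rfl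
      rw [hm_eq y, huy, ENNReal.ofReal_mul (hKnn x y), ENNReal.ofReal_mul (hmrpos y).le]
      ring
    calc ∑ y, Q x y = (∑ y, ENNReal.ofReal (K x y * (mr y * u θs y))) * (uu x)⁻¹ := by
          rw [Finset.sum_congr rfl fun y _ => h1 y, Finset.sum_mul]
      _ = ENNReal.ofReal (∑ y, K x y * (mr y * u θs y)) * (uu x)⁻¹ := by
          rw [← ENNReal.ofReal_sum_of_nonneg
            (fun y _ => mul_nonneg (hKnn x y) (mul_nonneg (hmrpos y).le (hupos θs y).le))]
      _ = uu x * (uu x)⁻¹ := by rw [← heigr x]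
      _ = 1 := ENNReal.mul_inv_cancel (huu0 x) (huutop x)
  have hm0 : ∀ y, m y ≠ 0 := by
    intro y
    rw [hm_eq y]
    simp [ENNReal.ofReal_eq_zero, not_le, hmrpos y]
  have hQpos : ∀ a b, 0 < K a b → Q a b ≠ 0 := by
    intro a b h
    show ENNReal.ofReal (K a b) * m b * uu b * (uu a)⁻¹ ≠ 0
    refine mul_ne_zero (mul_ne_zero (mul_ne_zero ?_ (hm0 b)) (huu0 b)) ?_
    · simp [ENNReal.ofReal_eq_zero, not_le, h]
    · exact ENNReal.inv_ne_zero.2 (huutop a)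
    -- return time characterizations
  set T : Ω → ℕ := fun ω => sInf {k : ℕ | 1 ≤ k ∧ X k ω = x0} with hT
  have hT0 : ∀ ω, T ω = 0 ↔ ∀ k, 1 ≤ k → X k ω ≠ x0 := by
    intro ω
    show sInf {k : ℕ | 1 ≤ k ∧ X k ω = x0} = 0 ↔ _
    rw [Nat.sInf_eq_zero]
    constructor
    · rintro (⟨h1, _⟩ | hempty)
      · omega
      · intro k hk hx
        have hmem : k ∈ {k : ℕ | 1 ≤ k ∧ X k ω = x0} := ⟨hk, hx⟩
        rw [hempty] at hmem
        exact hmem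
    · intro h
      right
      ext k
      simp only [Set.mem_setOf_eq, Set.mem_empty_iff_false, iff_false, not_and]
      exact fun hk => h k hk
  have hTsucc : ∀ ω k, T ω = k + 1
      ↔ (X (k+1) ω = x0 ∧ ∀ i, 1 ≤ i → i ≤ k → X i ω ≠ x0) := by
    intro ω k
    constructor
    · intro h
      have hne : {j : ℕ | 1 ≤ j ∧ X j ω = x0}.Nonempty := by
        by_contra hc
        have h0 : T ω = 0 := by
          show sInf _ = 0
          rw [Set.not_nonempty_iff_eq_empty.1 hc, Nat.sInf_empty]
        omega
      have hmem := Nat.sInf_mem hne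
      have hmem' : T ω ∈ {j : ℕ | 1 ≤ j ∧ X j ω = x0} := hmem
      rw [h] at hmem'
      refine ⟨hmem'.2, fun i h1 h2 hx => ?_⟩
      have hle : T ω ≤ i := Nat.sInf_le ⟨h1, hx⟩
      omega
    · rintro ⟨hx, hav⟩
      show sInf _ = k + 1
      refine le_antisymm (Nat.sInf_le ⟨by omega, hx⟩) ?_
      refine le_csInf ⟨k+1, by omega, hx⟩ fun n hn => ?_
      by_contra hc
      push_neg at hc
      exact hav n hn.1 (by omega) hn.2
  -- path events
  set Ev : ℕ → (ℕ → S) → Set Ω := fun k p => {ω | ∀ i, 1 ≤ i → i ≤ k → X i ω = p i} with hEv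
  have hEvMeas : ∀ k p, MeasurableSet (Ev k p) := by
    intro k p
    have : Ev k p = ⋂ (i : ℕ), ⋂ (_ : 1 ≤ i), ⋂ (_ : i ≤ k), (X i) ⁻¹' {p i} := by
      ext ω
      simp [hEv, Set.mem_iInter]
    rw [this]
    exact MeasurableSet.iInter fun i => MeasurableSet.iInter fun _ =>
      MeasurableSet.iInter fun _ => (hXmeas i) (measurableSet_singleton _)
  set A : ℕ → Set Ω := fun k => {ω | T ω = k} with hA
  have hAMeas : ∀ k, MeasurableSet (A k) := by
    intro k
    cases k with
    | zero =>
      have : A 0 = ⋂ (i : ℕ), ⋂ (_ : 1 ≤ i), ((X i) ⁻¹' {x0})ᶜ := by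
        ext ω
        simp only [hA, Set.mem_setOf_eq, Set.mem_iInter, Set.mem_compl_iff, Set.mem_preimage,
          Set.mem_singleton_iff]
        exact hT0 ω
      rw [this]
      exact MeasurableSet.iInter fun i => MeasurableSet.iInter fun _ =>
        ((hXmeas i) (measurableSet_singleton _)).compl
    | succ k =>
      have : A (k+1) = (X (k+1)) ⁻¹' {x0}
          ∩ ⋂ (i : ℕ), ⋂ (_ : 1 ≤ i), ⋂ (_ : i ≤ k), ((X i) ⁻¹' {x0})ᶜ := by
        ext ω
        simp only [hA, Set.mem_setOf_eq, Set.mem_inter_iff, Set.mem_preimage,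
          Set.mem_singleton_iff, Set.mem_iInter, Set.mem_compl_iff]
        exact hTsucc ω k
      rw [this]
      exact ((hXmeas (k+1)) (measurableSet_singleton _)).inter
        (MeasurableSet.iInter fun i => MeasurableSet.iInter fun _ =>
          MeasurableSet.iInter fun _ => ((hXmeas i) (measurableSet_singleton _)).compl)
  -- cylinder probabilities
  have hcyl : ∀ (n : ℕ) (q : ℕ → S), q 0 = x0 →
      P {ω | ∀ i ≤ n, X i ω = q i} = ∏ i ∈ Finset.range n, ENNReal.ofReal (K (q i) (q (i+1))) := by
    intro n q hq0
    induction n with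
    | zero =>
      have hone : {ω | ∀ i ≤ 0, X i ω = q i} =ᵐ[P] (Set.univ : Set Ω) := by
        rw [Filter.eventuallyEq_set]
        filter_upwards [hX0] with ω h0
        simp only [Set.mem_setOf_eq, Set.mem_univ, iff_true]
        intro i hi
        rw [Nat.le_zero] at hi
        subst hi
        rw [h0, hq0]
      rw [measure_congr hone, measure_univ, Finset.range_zero, Finset.prod_empty]
    | succ n ih =>
      rw [hMarkov n q, ih, Finset.prod_range_succ]
  have hEvP : ∀ (k : ℕ) (p : ℕ → S), p 0 = x0 →
      P (Ev k p) = ∏ i ∈ Finset.range k, ENNReal.ofReal (K (p i) (p (i+1))) := by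
    intro k p hp0
    have hae : Ev k p =ᵐ[P] {ω | ∀ i ≤ k, X i ω = p i} := by
      rw [Filter.eventuallyEq_set]
      filter_upwards [hX0] with ω h0
      simp only [hEv, Set.mem_setOf_eq]
      constructor
      · intro h i hi
        rcases Nat.eq_zero_or_pos i with h0' | h0'
        · subst h0'
          rw [h0, hp0]
        · exact h i h0' hi
      · exact fun h i h1 h2 => h i h2
    rw [measure_congr hae, hcyl k p hp0]
    -- avoidance events and nullity of never-returning
  have hAvE : ∀ n : ℕ, {ω | ∀ i, 1 ≤ i → i ≤ n → X i ω ≠ x0}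
      = ⋃ v ∈ avF x0 n, Ev n (pth x0 n v) := by
    intro n
    ext ω
    simp only [Set.mem_setOf_eq, Set.mem_iUnion, exists_prop]
    constructor
    · intro h
      refine ⟨fun j : Fin n => X ((j : ℕ) + 1) ω, ?_, ?_⟩
      · rw [avF, Finset.mem_filter]
        exact ⟨Finset.mem_univ _, fun j => h ((j : ℕ) + 1) (by omega) (by omega)⟩
      · intro i h1 h2
        rw [pth_pos x0 n _ i h1 h2]
        show X i ω = X ((i - 1) + 1) ω
        congr 1
        omega
    · rintro ⟨v, hv, hω⟩ i h1 h2
      rw [avF, Finset.mem_filter] at hv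
      have hxi := hω i h1 h2
      rw [hxi, pth_pos x0 n v i h1 h2]
      exact hv.2 _
  have hAvP : ∀ n : ℕ, P {ω | ∀ i, 1 ≤ i → i ≤ n → X i ω ≠ x0} = mcAv x0 BK n x0 := by
    intro n
    rw [hAvE n]
    have hdisj : (↑(avF x0 n) : Set (Fin n → S)).PairwiseDisjoint
        (fun v => Ev n (pth x0 n v)) := by
      intro v _ w _ hvw
      rw [Function.onFun, Set.disjoint_left]
      intro ω h1 h2
      refine hvw (funext fun j => ?_)
      have e1 := h1 ((j : ℕ) + 1) (by omega) (by omega)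
      have e2 := h2 ((j : ℕ) + 1) (by omega) (by omega)
      rw [pth_pos x0 n v ((j : ℕ) + 1) (by omega) (by omega)] at e1
      rw [pth_pos x0 n w ((j : ℕ) + 1) (by omega) (by omega)] at e2
      have ej : (⟨(j : ℕ) + 1 - 1, by omega⟩ : Fin n) = j := by
        ext
        simp
      rw [ej] at e1 e2
      rw [← e1, ← e2]
    rw [measure_biUnion_finset hdisj (fun v _ => hEvMeas n (pth x0 n v))]
    rw [← avSum x0 BK n x0]
    refine Finset.sum_congr rfl fun v _ => ?_
    rw [hEvP n (pth x0 n v) (pth_zero x0 n v)]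
    rfl
  have hA0 : P (A 0) = 0 := by
    have hsub : ∀ n : ℕ, A 0 ⊆ {ω | ∀ i, 1 ≤ i → i ≤ n → X i ω ≠ x0} := by
      intro n ω hω i h1 _
      exact (hT0 ω).1 hω i h1
    have hle : ∀ n, P (A 0) ≤ mcAv x0 BK n x0 := fun n =>
      (measure_mono (hsub n)).trans (hAvP n).le
    have h0 : ⨅ n, mcAv x0 BK n x0 = 0 :=
      mcAv_iInf hBKrow (exists_hit_pos hBKrow hKnn hKrow hKirr hBKpos) x0
    refine le_antisymm ?_ zero_le
    rw [← h0]
    exact le_iInf hle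
    -- measurability of the reward process
  have hSpm : ∀ n, Measurable (Sp n) := by
    intro n
    have hfe : Sp n = fun ω => ∑ k ∈ Finset.range n, γ (X (k+1) ω) (ξ (k+1) ω) :=
      funext fun ω => hSp n ω
    rw [hfe]
    refine Finset.measurable_sum _ fun k _ => ?_
    have hfe2 : (fun ω => γ (X (k+1) ω) (ξ (k+1) ω))
        = fun ω => ∑ x : S, if X (k+1) ω = x then γ x (ξ (k+1) ω) else 0 := by
      funext ω
      rw [Finset.sum_ite_eq Finset.univ (X (k+1) ω) (fun x => γ x (ξ (k+1) ω))]
      simp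
    rw [hfe2]
    refine Finset.measurable_sum _ fun x _ => ?_
    refine Measurable.ite ?_ ((hγm x).comp (hξmeas (k+1))) measurable_const
    exact (hXmeas (k+1)) (measurableSet_singleton x)
  set e : ℕ → Ω → ℝ≥0∞ := fun k ω => ENNReal.ofReal (exp (θs * Sp k ω)) with he
  have hem : ∀ k, Measurable (e k) := fun k =>
    ENNReal.measurable_ofReal.comp (measurable_exp.comp ((hSpm k).const_mul θs))
  have hpt : ∀ ω, e (T ω) ω = ∑' k, Set.indicator (A k) (e k) ω := by
    intro ω
    have h2 : ∀ (k : ℕ), k ≠ T ω → Set.indicator (A k) (e k) ω = 0 := fun k hk =>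
      Set.indicator_of_notMem (show ω ∉ A k from fun h => hk ((show T ω = k from h).symm)) (e k)
    rw [tsum_eq_single (T ω) h2]
    exact (Set.indicator_of_mem (show ω ∈ A (T ω) from rfl) (e (T ω))).symm
  have hterm : ∀ k : ℕ, ∫⁻ ω, Set.indicator (A (k+1)) (e (k+1)) ω ∂P = mcRet x0 Q (k+1) x0 := by
    intro k
    set hfun : (Fin (k+1) → S) → Ω → ℝ≥0∞ := fun v ω =>
      ENNReal.ofReal (exp (θs * ∑ i ∈ Finset.range (k+1), γ (pth x0 (k+1) v (i+1)) (ξ (i+1) ω))) with hh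
    have hsplit : ∀ ω, Set.indicator (A (k+1)) (e (k+1)) ω
        = ∑ v ∈ admF x0 (k+1), Set.indicator (Ev (k+1) (pth x0 (k+1) v)) (hfun v) ω := by
      intro ω
      by_cases hTw : T ω = k + 1
      · obtain ⟨hx, hav⟩ := (hTsucc ω k).1 hTw
        have hvm : (fun j : Fin (k+1) => X ((j : ℕ) + 1) ω) ∈ admF x0 (k+1) := by
          rw [admF, Finset.mem_filter]
          refine ⟨Finset.mem_univ _, fun j hj => hav ((j : ℕ) + 1) (by omega) (by omega),
            fun j hj => ?_⟩
          show X ((j : ℕ) + 1) ω = x0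
          rw [hj]
          exact hx
        have hmemEv : ω ∈ Ev (k+1) (pth x0 (k+1) (fun j : Fin (k+1) => X ((j : ℕ) + 1) ω)) := by
          intro i h1 h2
          show X i ω = pth x0 (k+1) _ i
          rw [pth_pos x0 (k+1) _ i h1 h2]
          show X i ω = X ((i - 1) + 1) ω
          congr 1
          omega
        rw [Finset.sum_eq_single_of_mem _ hvm ?_]
        · rw [Set.indicator_of_mem (show ω ∈ A (k+1) from hTw) (e (k+1)),
            Set.indicator_of_mem hmemEv]
          show ENNReal.ofReal (exp (θs * Sp (k+1) ω)) = _
          have hsum : ∑ i ∈ Finset.range (k+1), γ (X (i+1) ω) (ξ (i+1) ω)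
              = ∑ i ∈ Finset.range (k+1),
                γ (pth x0 (k+1) (fun j : Fin (k+1) => X ((j : ℕ) + 1) ω) (i+1)) (ξ (i+1) ω) := by
            refine Finset.sum_congr rfl fun i hi => ?_
            have hik : i < k + 1 := Finset.mem_range.1 hi
            show γ (X (i+1) ω) _ = γ (pth x0 (k+1) _ (i+1)) _
            rw [pth_pos x0 (k+1) _ (i+1) (by omega) (by omega)]
            show γ (X (i+1) ω) _ = γ (X ((i + 1 - 1) + 1) ω) _
            have he1 : (i + 1 - 1) + 1 = i + 1 := by omega
            rw [he1]
          rw [hSp (k+1) ω, hsum]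
        · intro v hv hne
          refine Set.indicator_of_notMem (fun hEvm => hne ?_) _
          funext j
          have h3 := hEvm ((j : ℕ) + 1) (by omega) (by omega)
          rw [pth_pos x0 (k+1) v ((j : ℕ) + 1) (by omega) (by omega)] at h3
          have hej : (⟨(j : ℕ) + 1 - 1, by omega⟩ : Fin (k+1)) = j := by
            ext
            simp
          rw [hej] at h3
          exact h3.symm
      · rw [Set.indicator_of_notMem (show ω ∉ A (k+1) from hTw)]
        symm
        refine Finset.sum_eq_zero fun v hv => ?_
        refine Set.indicator_of_notMem (fun hEvm => hTw ?_) _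
        rw [admF, Finset.mem_filter] at hv
        refine (hTsucc ω k).2 ⟨?_, fun i h1 h2 hxx => ?_⟩
        · have h3 := hEvm (k+1) (by omega) (le_refl _)
          rw [pth_pos x0 (k+1) v (k+1) (by omega) (le_refl _)] at h3
          have h4 := hv.2.2 ⟨k + 1 - 1, by omega⟩ rfl
          rw [h3, h4]
        · have h3 := hEvm i h1 (by omega)
          rw [pth_pos x0 (k+1) v i h1 (by omega)] at h3
          refine hv.2.1 ⟨i - 1, by omega⟩ (show (i - 1) + 1 < k + 1 by omega) ?_
          rw [← h3]
          exact hxx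
    have hmeash : ∀ v, Measurable (hfun v) := fun v =>
      ENNReal.measurable_ofReal.comp (measurable_exp.comp
        ((Finset.measurable_sum _ fun i _ => (hγm _).comp (hξmeas (i+1))).const_mul θs))
    rw [lintegral_congr hsplit,
      lintegral_finset_sum _ (fun v _ => (hmeash v).indicator (hEvMeas _ _))]
    have hv1 : ∀ v ∈ admF x0 (k+1), ∫⁻ ω, Set.indicator (Ev (k+1) (pth x0 (k+1) v)) (hfun v) ω ∂P
        = P (Ev (k+1) (pth x0 (k+1) v)) * ∏ i ∈ Finset.range (k+1), m (pth x0 (k+1) v (i+1)) := by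
      intro v _
      set Cv : Set (ℕ → S) := {s | ∀ i, 1 ≤ i → i ≤ k+1 → s i = pth x0 (k+1) v i} with hCvdef
      have hCv : MeasurableSet Cv := by
        have : Cv = ⋂ (i : ℕ), ⋂ (_ : 1 ≤ i), ⋂ (_ : i ≤ k+1),
            (fun s : ℕ → S => s i) ⁻¹' {pth x0 (k+1) v i} := by
          ext s
          simp [hCvdef, Set.mem_iInter]
        rw [this]
        exact MeasurableSet.iInter fun i => MeasurableSet.iInter fun _ =>
          MeasurableSet.iInter fun _ => (measurable_pi_apply i) (measurableSet_singleton _)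
      set G : (ℕ → ℝ × ℝ) → ℝ≥0∞ := fun s =>
        ENNReal.ofReal (exp (θs * ∑ i ∈ Finset.range (k+1), γ (pth x0 (k+1) v (i+1)) (s i).1)) with hG
      have hGm : Measurable G := ENNReal.measurable_ofReal.comp (measurable_exp.comp
        ((Finset.measurable_sum _ fun i _ =>
          (hγm _).comp (measurable_fst.comp (measurable_pi_apply i))).const_mul θs))
      have hFm : Measurable (Set.indicator Cv (fun _ => (1 : ℝ≥0∞))) :=
        measurable_const.indicator hCv
      have hXpm : Measurable (fun ω (n : ℕ) => X n ω) := measurable_pi_iff.2 hXmeas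
      have hΞm : Measurable (fun ω (n : ℕ) => (ξ (n+1) ω, η (n+1) ω)) :=
        measurable_pi_iff.2 fun n => (hξmeas (n+1)).prodMk (hηmeas (n+1))
      have hptw : ∀ ω, Set.indicator (Ev (k+1) (pth x0 (k+1) v)) (hfun v) ω
          = Set.indicator Cv (fun _ => (1 : ℝ≥0∞)) ((fun ω (n : ℕ) => X n ω) ω)
            * G ((fun ω (n : ℕ) => (ξ (n+1) ω, η (n+1) ω)) ω) := by
        intro ω
        by_cases hmem : ω ∈ Ev (k+1) (pth x0 (k+1) v)
        · rw [Set.indicator_of_mem hmem, Set.indicator_of_mem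
            (show (fun n => X n ω) ∈ Cv from hmem), one_mul]
        · rw [Set.indicator_of_notMem hmem, Set.indicator_of_notMem
            (show (fun n => X n ω) ∉ Cv from hmem), zero_mul]
      rw [lintegral_congr hptw, lintegral_indep_mul P hXpm hΞm hindX hFm hGm]
      congr 1
      · have hptw2 : ∀ ω, Set.indicator Cv (fun _ => (1 : ℝ≥0∞)) ((fun ω (n : ℕ) => X n ω) ω)
            = Set.indicator (Ev (k+1) (pth x0 (k+1) v)) (1 : Ω → ℝ≥0∞) ω := by
          intro ω
          by_cases hmem : ω ∈ Ev (k+1) (pth x0 (k+1) v)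
          · rw [Set.indicator_of_mem hmem, Set.indicator_of_mem
              (show (fun n => X n ω) ∈ Cv from hmem)]
            rfl
          · rw [Set.indicator_of_notMem hmem, Set.indicator_of_notMem
              (show (fun n => X n ω) ∉ Cv from hmem)]
        rw [lintegral_congr hptw2, lintegral_indicator_one (hEvMeas _ _)]
      · set Y : ℕ → Ω → ℝ≥0∞ := fun i ω =>
          ENNReal.ofReal (exp (θs * γ (pth x0 (k+1) v (i+1)) (ξ (i+1) ω))) with hYdef
        have hGpt : ∀ ω, G ((fun ω (n : ℕ) => (ξ (n+1) ω, η (n+1) ω)) ω)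
            = ∏ i ∈ Finset.range (k+1), Y i ω := by
          intro ω
          show ENNReal.ofReal
            (exp (θs * ∑ i ∈ Finset.range (k+1), γ (pth x0 (k+1) v (i+1)) (ξ (i+1) ω))) = _
          rw [Finset.mul_sum, Real.exp_sum,
            ENNReal.ofReal_prod_of_nonneg (fun i _ => (exp_pos _).le)]
        rw [lintegral_congr hGpt]
        have hYm : ∀ i, Measurable (Y i) := fun i => ENNReal.measurable_ofReal.comp
          (measurable_exp.comp (((hγm _).comp (hξmeas (i+1))).const_mul θs))
        have hYind : iIndepFun Y P :=
          hindep.comp (fun i (z : ℝ × ℝ) => ENNReal.ofReal (exp (θs * γ (pth x0 (k+1) v (i+1)) z.1)))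
            (fun i => ENNReal.measurable_ofReal.comp
              (measurable_exp.comp (((hγm _).comp measurable_fst).const_mul θs)))
        rw [lintegral_prod_indep P hYind hYm (k+1)]
        refine Finset.prod_congr rfl fun i _ => ?_
        have hφm : Measurable (fun z : ℝ × ℝ =>
            ENNReal.ofReal (exp (θs * γ (pth x0 (k+1) v (i+1)) z.1))) :=
          ENNReal.measurable_ofReal.comp
            (measurable_exp.comp (((hγm _).comp measurable_fst).const_mul θs))
        calc ∫⁻ ω, Y i ω ∂P
            = ∫⁻ z : ℝ × ℝ, ENNReal.ofReal (exp (θs * γ (pth x0 (k+1) v (i+1)) z.1))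
                ∂(Measure.map (fun ω => (ξ (i+1) ω, η (i+1) ω)) P) := by
              rw [lintegral_map hφm ((hξmeas (i+1)).prodMk (hηmeas (i+1)))]
          _ = ∫⁻ z : ℝ × ℝ, ENNReal.ofReal (exp (θs * γ (pth x0 (k+1) v (i+1)) z.1))
                ∂(Measure.map (fun ω => (ξ 1 ω, η 1 ω)) P) := by
              rw [hiid (i+1) (by omega)]
          _ = ∫⁻ ω, ENNReal.ofReal (exp (θs * γ (pth x0 (k+1) v (i+1)) (ξ 1 ω))) ∂P :=
              lintegral_map hφm ((hξmeas 1).prodMk (hηmeas 1))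
          _ = m (pth x0 (k+1) v (i+1)) := rfl
    rw [Finset.sum_congr rfl hv1, ← retSum x0 Q k x0]
    refine Finset.sum_congr rfl fun v hv => ?_
    rw [hEvP (k+1) (pth x0 (k+1) v) rfl]
    show _ = ∏ i ∈ Finset.range (k+1), Q (pth x0 (k+1) v i) (pth x0 (k+1) v (i+1))
    have hQsplit : ∀ i : ℕ, Q (pth x0 (k+1) v i) (pth x0 (k+1) v (i+1))
        = (ENNReal.ofReal (K (pth x0 (k+1) v i) (pth x0 (k+1) v (i+1))) * m (pth x0 (k+1) v (i+1)))
          * (uu (pth x0 (k+1) v (i+1)) * (uu (pth x0 (k+1) v i))⁻¹) := by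
      intro i
      show ENNReal.ofReal _ * m _ * uu _ * (uu _)⁻¹ = _
      ring
    rw [Finset.prod_congr rfl (fun i _ => hQsplit i), Finset.prod_mul_distrib,
      Finset.prod_mul_distrib,
      prod_ratio (fun i => uu (pth x0 (k+1) v i)) (fun i => huu0 _) (fun i => huutop _) (k+1)]
    have hlast : pth x0 (k+1) v (k+1) = x0 := by
      rw [admF, Finset.mem_filter] at hv
      show pth x0 (k+1) v (k+1) = x0
      rw [pth_pos x0 (k+1) v (k+1) (by omega) (le_refl _)]
      exact hv.2.2 ⟨k + 1 - 1, by omega⟩ rfl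
    rw [hlast, show pth x0 (k+1) v 0 = x0 from rfl,
      ENNReal.mul_inv_cancel (huu0 x0) (huutop x0), mul_one]
  calc ∫⁻ ω, ENNReal.ofReal (exp (θs * Sp (sInf {k : ℕ | 1 ≤ k ∧ X k ω = x0}) ω)) ∂P
      = ∫⁻ ω, ∑' k, Set.indicator (A k) (e k) ω ∂P := lintegral_congr hpt
    _ = ∑' k, ∫⁻ ω, Set.indicator (A k) (e k) ω ∂P :=
        lintegral_tsum fun k => ((hem k).indicator (hAMeas k)).aemeasurable
    _ = ∑' k, mcRet x0 Q k x0 := by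
        refine tsum_congr fun k => ?_
        cases k with
        | zero =>
          have h1 : ∀ ω, Set.indicator (A 0) (e 0) ω
              = Set.indicator (A 0) (1 : Ω → ℝ≥0∞) ω := by
            intro ω
            by_cases hmem : ω ∈ A 0
            · rw [Set.indicator_of_mem hmem, Set.indicator_of_mem hmem]
              show ENNReal.ofReal (exp (θs * Sp 0 ω)) = 1
              rw [hSp 0 ω, Finset.range_zero, Finset.sum_empty, mul_zero, exp_zero,
                ENNReal.ofReal_one]
            · rw [Set.indicator_of_notMem hmem, Set.indicator_of_notMem hmem]
          rw [lintegral_congr h1, lintegral_indicator_one (hAMeas 0), hA0]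
          rfl
        | succ k => exact hterm k
    _ = 1 := mcRet_tsum hQrow (exists_hit_pos hQrow hKnn hKrow hKirr hQpos)
end

section
/- Under Assumptions 1 and 2, let σ(y)=inf{n≥0 : S_n > y}. There exists a constant c ∈ (0,∞) such that for all y ≥ 0, E_{x_0}[exp(−θ* S_{σ(y)}) · (u_{θ*}(x_0)/u_{θ*}(X_{σ(y)})) · 1(σ(y)<∞)] ≤ c·exp(−2θ* y). (This quantity equals the second moment of the exponentially tilted importance sampling estimator Z′_y of P_{x_0}(max_{n≥0} S_n > y), so this estimator is strongly efficient.) -/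
open MeasureTheory ProbabilityTheory Real Filter
open scoped ENNReal NNReal

set_option linter.unusedSectionVars false

section Stmt7Aux

variable {S : Type} [Fintype S] [DecidableEq S] [MeasurableSpace S] [MeasurableSingletonClass S]
variable {Ω : Type} [MeasurableSpace Ω]

/-- extend a finite tuple to `ℕ` with junk value `x0` -/
def s7ext (x0 : S) {m : ℕ} (q : Fin m → S) (i : ℕ) : S :=
  if h : i < m then q ⟨i, h⟩ else x0

/-- cylinder set determined by the first `m+1` values of the chain -/
def s7cyl (X : ℕ → Ω → S) (x0 : S) (m : ℕ) (q : Fin (m + 1) → S) : Set Ω :=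
  {ω | ∀ i ≤ m, X i ω = s7ext x0 q i}

noncomputable def s7ind {α : Type*} (A : Set α) : α → ℝ≥0∞ := A.indicator fun _ => 1

lemma s7ind_of_mem {α : Type*} {A : Set α} {a : α} (h : a ∈ A) : s7ind A a = 1 :=
  Set.indicator_of_mem h _

lemma s7ind_of_not_mem {α : Type*} {A : Set α} {a : α} (h : a ∉ A) : s7ind A a = 0 :=
  Set.indicator_of_notMem h _

lemma s7ind_congr {α β : Type*} {A : Set α} {B : Set β} {a : α} {b : β}
    (h : a ∈ A ↔ b ∈ B) : s7ind A a = s7ind B b := by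
  by_cases ha : a ∈ A
  · rw [s7ind_of_mem ha, s7ind_of_mem (h.1 ha)]
  · rw [s7ind_of_not_mem ha, s7ind_of_not_mem (fun hb => ha (h.2 hb))]

lemma s7ind_meas {A : Set Ω} (hA : MeasurableSet A) : Measurable (s7ind A) :=
  Measurable.indicator measurable_const hA

/-- driver-path functional recording the constraint `S_k ≤ y` for `k ≤ n` and the factor
`exp(θ S_n)`, along a fixed modulating path `xp`. -/
noncomputable def s7F (γ : S → ℝ → ℝ) (θs y : ℝ) (n : ℕ) (xp : ℕ → S)
    (v : ℕ → ℝ × ℝ) : ℝ≥0∞ :=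
  s7ind {w : ℕ → ℝ × ℝ | ∀ k ≤ n, ∑ j ∈ Finset.range k, γ (xp (j + 1)) (w j).1 ≤ y} v *
    ENNReal.ofReal (Real.exp (θs * ∑ j ∈ Finset.range n, γ (xp (j + 1)) (v j).1))

noncomputable def s7Spd (γ : S → ℝ → ℝ) (X : ℕ → Ω → S) (D : ℕ → Ω → ℝ × ℝ)
    (n : ℕ) (ω : Ω) : ℝ :=
  ∑ j ∈ Finset.range n, γ (X (j + 1) ω) (D j ω).1

def s7E (γ : S → ℝ → ℝ) (X : ℕ → Ω → S) (D : ℕ → Ω → ℝ × ℝ) (y : ℝ) (n : ℕ) : Set Ω :=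
  {ω | ∀ k ≤ n, s7Spd γ X D k ω ≤ y}

noncomputable def s7W (γ : S → ℝ → ℝ) (X : ℕ → Ω → S) (D : ℕ → Ω → ℝ × ℝ)
    (u' : S → ℝ) (θs : ℝ) (n : ℕ) (ω : Ω) : ℝ≥0∞ :=
  ENNReal.ofReal (Real.exp (θs * s7Spd γ X D n ω) * u' (X n ω))

lemma s7meas_comp {γ : S → ℝ → ℝ} (hγ : ∀ x, Measurable (γ x)) {f : Ω → S} {g : Ω → ℝ}
    (hf : Measurable f) (hg : Measurable g) : Measurable fun ω => γ (f ω) (g ω) := by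
  have h : (fun ω => γ (f ω) (g ω)) = fun ω => ∑ x : S, if f ω = x then γ x (g ω) else 0 := by
    funext ω
    rw [Finset.sum_ite_eq]
    simp
  rw [h]
  exact Finset.measurable_sum _ fun x _ =>
    Measurable.ite (hf (measurableSet_singleton x)) ((hγ x).comp hg) measurable_const

variable {γ : S → ℝ → ℝ} {X : ℕ → Ω → S} {D : ℕ → Ω → ℝ × ℝ}

lemma s7Spd_meas (hγ : ∀ x, Measurable (γ x)) (hX : ∀ n, Measurable (X n))
    (hD : ∀ n, Measurable (D n)) (n : ℕ) : Measurable (s7Spd γ X D n) :=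
  Finset.measurable_sum _ fun j _ => s7meas_comp hγ (hX (j + 1)) (measurable_fst.comp (hD j))

lemma s7E_meas (hγ : ∀ x, Measurable (γ x)) (hX : ∀ n, Measurable (X n))
    (hD : ∀ n, Measurable (D n)) (y : ℝ) (n : ℕ) : MeasurableSet (s7E γ X D y n) := by
  have h : s7E γ X D y n = ⋂ k ∈ Set.Iic n, {ω | s7Spd γ X D k ω ≤ y} := by
    ext ω; simp [s7E]
  rw [h]
  exact MeasurableSet.biInter (Set.to_countable _) fun k _ =>
    measurableSet_le (s7Spd_meas hγ hX hD k) measurable_const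

lemma s7W_meas (hγ : ∀ x, Measurable (γ x)) (hX : ∀ n, Measurable (X n))
    (hD : ∀ n, Measurable (D n)) (u' : S → ℝ) (θs : ℝ) (n : ℕ) :
    Measurable (s7W γ X D u' θs n) := by
  apply ENNReal.measurable_ofReal.comp
  exact (((s7Spd_meas hγ hX hD n).const_mul θs).exp).mul
    ((measurable_of_countable u').comp (hX n))

lemma s7cyl_meas (hX : ∀ n, Measurable (X n)) (x0 : S) (m : ℕ) (q : Fin (m + 1) → S) :
    MeasurableSet (s7cyl X x0 m q) := by
  have h : s7cyl X x0 m q = ⋂ i ∈ Set.Iic m, (X i) ⁻¹' {s7ext x0 q i} := by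
    ext ω; simp [s7cyl]
  rw [h]
  exact MeasurableSet.biInter (Set.to_countable _) fun i _ =>
    (hX i) (measurableSet_singleton _)

lemma s7F_meas (hγ : ∀ x, Measurable (γ x)) (θs y : ℝ) (n : ℕ) (xp : ℕ → S) :
    Measurable (s7F γ θs y n xp) := by
  apply Measurable.mul
  · apply s7ind_meas
    have h : {w : ℕ → ℝ × ℝ | ∀ k ≤ n, ∑ j ∈ Finset.range k, γ (xp (j + 1)) (w j).1 ≤ y}
        = ⋂ k ∈ Set.Iic n, {w : ℕ → ℝ × ℝ | ∑ j ∈ Finset.range k, γ (xp (j + 1)) (w j).1 ≤ y} := by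
      ext w; simp
    rw [h]
    exact MeasurableSet.biInter (Set.to_countable _) fun k _ =>
      measurableSet_le (Finset.measurable_sum _ fun j _ =>
        (hγ _).comp (measurable_fst.comp (measurable_pi_apply j))) measurable_const
  · exact ENNReal.measurable_ofReal.comp
      (((Finset.measurable_sum _ fun j _ =>
        (hγ _).comp (measurable_fst.comp (measurable_pi_apply j))).const_mul θs).exp)

lemma s7F_congr_v (θs y : ℝ) (n : ℕ) (xp : ℕ → S) {v v' : ℕ → ℝ × ℝ}
    (h : ∀ j < n, v j = v' j) : s7F γ θs y n xp v = s7F γ θs y n xp v' := by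
  unfold s7F
  have hsum : ∀ k ≤ n, (∑ j ∈ Finset.range k, γ (xp (j + 1)) (v j).1)
      = ∑ j ∈ Finset.range k, γ (xp (j + 1)) (v' j).1 := fun k hk =>
    Finset.sum_congr rfl fun j hj => by
      rw [h j (lt_of_lt_of_le (Finset.mem_range.1 hj) hk)]
  rw [hsum n le_rfl]
  congr 1
  refine s7ind_congr ⟨fun hm k hk => ?_, fun hm k hk => ?_⟩
  · rw [← hsum k hk]; exact hm k hk
  · rw [hsum k hk]; exact hm k hk

lemma s7F_congr_xp (θs y : ℝ) (n : ℕ) {xp xp' : ℕ → S}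
    (h : ∀ j < n, xp (j + 1) = xp' (j + 1)) : s7F γ θs y n xp = s7F γ θs y n xp' := by
  funext v
  unfold s7F
  have hsum : ∀ k ≤ n, (∑ j ∈ Finset.range k, γ (xp (j + 1)) (v j).1)
      = ∑ j ∈ Finset.range k, γ (xp' (j + 1)) (v j).1 := fun k hk =>
    Finset.sum_congr rfl fun j hj => by
      rw [h j (lt_of_lt_of_le (Finset.mem_range.1 hj) hk)]
  rw [hsum n le_rfl]
  congr 1
  refine s7ind_congr ⟨fun hm k hk => ?_, fun hm k hk => ?_⟩
  · rw [← hsum k hk]; exact hm k hk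
  · rw [hsum k hk]; exact hm k hk

lemma s7ext_snoc_lt (x0 : S) {n : ℕ} (q' : Fin (n + 1) → S) (z : S) {i : ℕ} (h : i ≤ n) :
    s7ext x0 (Fin.snoc q' z : Fin (n + 2) → S) i = s7ext x0 q' i := by
  have h1 : i < n + 2 := by omega
  have h2 : i < n + 1 := by omega
  simp only [s7ext, dif_pos h1, dif_pos h2]
  have he : (⟨i, h1⟩ : Fin (n + 2)) = Fin.castSucc ⟨i, h2⟩ := rfl
  rw [he, Fin.snoc_castSucc]

lemma s7ext_snoc_last (x0 : S) {n : ℕ} (q' : Fin (n + 1) → S) (z : S) :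
    s7ext x0 (Fin.snoc q' z : Fin (n + 2) → S) (n + 1) = z := by
  have h1 : n + 1 < n + 2 := by omega
  simp only [s7ext, dif_pos h1]
  have he : (⟨n + 1, h1⟩ : Fin (n + 2)) = Fin.last (n + 1) := rfl
  rw [he, Fin.snoc_last]

lemma s7sum_cyl {P : Measure Ω} (hX : ∀ n, Measurable (X n)) (x0 : S) (m : ℕ)
    {f : Ω → ℝ≥0∞} (hf : Measurable f) :
    ∫⁻ ω, f ω ∂P = ∑ q : Fin (m + 1) → S, ∫⁻ ω, s7ind (s7cyl X x0 m q) ω * f ω ∂P := by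
  rw [← lintegral_finset_sum' Finset.univ (f := fun q ω => s7ind (s7cyl X x0 m q) ω * f ω)
    (fun q _ => ((s7ind_meas (s7cyl_meas hX x0 m q)).mul hf).aemeasurable)]
  refine lintegral_congr fun ω => ?_
  have hone : (∑ q : Fin (m + 1) → S, s7ind (s7cyl X x0 m q) ω) = 1 := by
    rw [Finset.sum_eq_single (fun i : Fin (m + 1) => X i ω)]
    · refine s7ind_of_mem fun i hi => ?_
      simp [s7ext, Nat.lt_succ_of_le hi]
    · intro q _ hq
      refine s7ind_of_not_mem fun hmem => hq ?_
      funext i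
      have hi := hmem i.val (Nat.lt_succ_iff.mp i.isLt)
      simp only [s7ext, dif_pos i.isLt, Fin.eta] at hi
      exact hi.symm
    · intro h; exact absurd (Finset.mem_univ _) h
  rw [← Finset.sum_mul, hone, one_mul]

lemma s7indepA {P : Measure Ω} (hX : ∀ n, Measurable (X n)) (hD : ∀ n, Measurable (D n))
    (hindX : IndepFun (fun ω (n : ℕ) => X n ω) (fun ω (n : ℕ) => D n ω) P)
    (x0 : S) (m : ℕ) (q : Fin (m + 1) → S) {ρ : (ℕ → ℝ × ℝ) → ℝ≥0∞} (hρ : Measurable ρ) :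
    ∫⁻ ω, s7ind (s7cyl X x0 m q) ω * ρ (fun k => D k ω) ∂P
      = P (s7cyl X x0 m q) * ∫⁻ ω, ρ (fun k => D k ω) ∂P := by
  set φ : (ℕ → S) → ℝ≥0∞ := s7ind {v : ℕ → S | ∀ i ≤ m, v i = s7ext x0 q i} with hφdef
  have hφ : Measurable φ := by
    apply s7ind_meas
    have h : {v : ℕ → S | ∀ i ≤ m, v i = s7ext x0 q i}
        = ⋂ i ∈ Set.Iic m, (fun v : ℕ → S => v i) ⁻¹' {s7ext x0 q i} := by
      ext v; simp
    rw [h]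
    exact MeasurableSet.biInter (Set.to_countable _) fun i _ =>
      (measurable_pi_apply i) (measurableSet_singleton _)
  have hcomp : ∀ ω, φ (fun n => X n ω) = s7ind (s7cyl X x0 m q) ω := fun ω =>
    s7ind_congr Iff.rfl
  have hYm : Measurable (fun ω (n : ℕ) => X n ω) := measurable_pi_lambda _ hX
  have hZm : Measurable (fun ω (n : ℕ) => D n ω) := measurable_pi_lambda _ hD
  have hi : IndepFun (fun ω => φ (fun n => X n ω)) (fun ω => ρ (fun n => D n ω)) P :=
    hindX.comp hφ hρ
  have hmul := lintegral_mul_eq_lintegral_mul_lintegral_of_indepFun''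
    ((hφ.comp hYm).aemeasurable) ((hρ.comp hZm).aemeasurable) hi
  calc ∫⁻ ω, s7ind (s7cyl X x0 m q) ω * ρ (fun k => D k ω) ∂P
      = ∫⁻ ω, φ (fun n => X n ω) * ρ (fun n => D n ω) ∂P := by
        refine lintegral_congr fun ω => ?_; rw [hcomp]
    _ = (∫⁻ ω, φ (fun n => X n ω) ∂P) * ∫⁻ ω, ρ (fun n => D n ω) ∂P := hmul
    _ = P (s7cyl X x0 m q) * ∫⁻ ω, ρ (fun k => D k ω) ∂P := by
        congr 1
        have : (fun ω => φ (fun n => X n ω)) = s7ind (s7cyl X x0 m q) := funext hcomp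
        rw [this]
        exact lintegral_indicator_one (s7cyl_meas hX x0 m q)

lemma s7indepB {P : Measure Ω} [IsProbabilityMeasure P] (hD : ∀ n, Measurable (D n))
    (hDindep : iIndepFun D P) (n : ℕ)
    {F : (ℕ → ℝ × ℝ) → ℝ≥0∞} (hF : Measurable F)
    (hFdep : ∀ v v' : ℕ → ℝ × ℝ, (∀ j < n, v j = v' j) → F v = F v')
    {g : ℝ × ℝ → ℝ≥0∞} (hg : Measurable g) :
    ∫⁻ ω, F (fun k => D k ω) * g (D n ω) ∂P
      = (∫⁻ ω, F (fun k => D k ω) ∂P) * ∫⁻ ω, g (D n ω) ∂P := by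
  have hdisj : Disjoint (Finset.range n) ({n} : Finset ℕ) := by
    simp [Finset.disjoint_singleton_right]
  have h1 := hDindep.indepFun_finset (Finset.range n) {n} hdisj hD
  set φ1 : ((i : (Finset.range n : Finset ℕ)) → ℝ × ℝ) → ℝ≥0∞ :=
    fun w => F (fun j => if h : j ∈ Finset.range n then w ⟨j, h⟩ else 0) with hφ1def
  set ψ1 : ((i : ({n} : Finset ℕ)) → ℝ × ℝ) → ℝ≥0∞ :=
    fun w => g (w ⟨n, Finset.mem_singleton_self n⟩) with hψ1def
  have hφ1 : Measurable φ1 := by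
    apply hF.comp
    refine measurable_pi_lambda _ fun j => ?_
    by_cases h : j ∈ Finset.range n
    · simp only [dif_pos h]; exact measurable_pi_apply _
    · simp only [dif_neg h]; exact measurable_const
  have hψ1 : Measurable ψ1 := hg.comp (measurable_pi_apply _)
  have h2 := h1.comp hφ1 hψ1
  have e1 : ∀ ω, φ1 (fun i : (Finset.range n : Finset ℕ) => D i ω) = F (fun k => D k ω) := by
    intro ω
    refine hFdep _ _ fun j hj => ?_
    exact dif_pos (Finset.mem_range.2 hj)
  have e2 : ∀ ω, ψ1 (fun i : ({n} : Finset ℕ) => D i ω) = g (D n ω) := fun ω => rfl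
  have hT1 : Measurable (fun ω (i : (Finset.range n : Finset ℕ)) => D i ω) :=
    measurable_pi_lambda _ fun i => hD i
  have hT2 : Measurable (fun ω (i : ({n} : Finset ℕ)) => D i ω) :=
    measurable_pi_lambda _ fun i => hD i
  have hmul := lintegral_mul_eq_lintegral_mul_lintegral_of_indepFun''
    ((hφ1.comp hT1).aemeasurable) ((hψ1.comp hT2).aemeasurable) h2
  calc ∫⁻ ω, F (fun k => D k ω) * g (D n ω) ∂P
      = ∫⁻ ω, φ1 (fun i : (Finset.range n : Finset ℕ) => D i ω)
          * ψ1 (fun i : ({n} : Finset ℕ) => D i ω) ∂P := by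
        refine lintegral_congr fun ω => ?_; rw [e1, e2]
    _ = (∫⁻ ω, φ1 (fun i : (Finset.range n : Finset ℕ) => D i ω) ∂P)
          * ∫⁻ ω, ψ1 (fun i : ({n} : Finset ℕ) => D i ω) ∂P := hmul
    _ = (∫⁻ ω, F (fun k => D k ω) ∂P) * ∫⁻ ω, g (D n ω) ∂P := by
        rw [lintegral_congr e1, lintegral_congr e2]

lemma s7rep {P : Measure Ω} (hX : ∀ n, Measurable (X n)) (hD : ∀ n, Measurable (D n))
    (hindX : IndepFun (fun ω (n : ℕ) => X n ω) (fun ω (n : ℕ) => D n ω) P)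
    (hγ : ∀ x, Measurable (γ x)) (u' : S → ℝ) (θs y : ℝ) (x0 : S) (n : ℕ) :
    ∫⁻ ω, s7ind (s7E γ X D y n) ω * s7W γ X D u' θs n ω ∂P
      = ∑ q : Fin (n + 1) → S, P (s7cyl X x0 n q) *
          ((∫⁻ ω, s7F γ θs y n (s7ext x0 q) (fun k => D k ω) ∂P)
            * ENNReal.ofReal (u' (s7ext x0 q n))) := by
  have hfm : Measurable (fun ω => s7ind (s7E γ X D y n) ω * s7W γ X D u' θs n ω) :=
    (s7ind_meas (s7E_meas hγ hX hD y n)).mul (s7W_meas hγ hX hD u' θs n)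
  rw [s7sum_cyl hX x0 n hfm]
  refine Finset.sum_congr rfl fun q _ => ?_
  have hρm : Measurable (fun v => s7F γ θs y n (s7ext x0 q) v
      * ENNReal.ofReal (u' (s7ext x0 q n))) :=
    (s7F_meas hγ θs y n _).mul measurable_const
  have hpt : ∀ ω, s7ind (s7cyl X x0 n q) ω * (s7ind (s7E γ X D y n) ω * s7W γ X D u' θs n ω)
      = s7ind (s7cyl X x0 n q) ω *
        (s7F γ θs y n (s7ext x0 q) (fun k => D k ω) * ENNReal.ofReal (u' (s7ext x0 q n))) := by
    intro ω
    by_cases hω : ω ∈ s7cyl X x0 n q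
    · have hXeq : ∀ i ≤ n, X i ω = s7ext x0 q i := hω
      have hSp : ∀ k ≤ n, s7Spd γ X D k ω
          = ∑ j ∈ Finset.range k, γ (s7ext x0 q (j + 1)) (D j ω).1 := by
        intro k hk
        exact Finset.sum_congr rfl fun j hj => by
          rw [hXeq (j + 1) (by have := Finset.mem_range.1 hj; omega)]
      have hind : s7ind (s7E γ X D y n) ω
          = s7ind {w : ℕ → ℝ × ℝ | ∀ k ≤ n,
              ∑ j ∈ Finset.range k, γ (s7ext x0 q (j + 1)) (w j).1 ≤ y} (fun k => D k ω) := by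
        refine s7ind_congr ⟨fun hm k hk => ?_, fun hm k hk => ?_⟩
        · rw [← hSp k hk]; exact hm k hk
        · rw [hSp k hk]; exact hm k hk
      have hW : s7W γ X D u' θs n ω
          = ENNReal.ofReal (Real.exp (θs * ∑ j ∈ Finset.range n,
              γ (s7ext x0 q (j + 1)) (D j ω).1)) * ENNReal.ofReal (u' (s7ext x0 q n)) := by
        unfold s7W
        rw [hSp n le_rfl, hXeq n le_rfl, ENNReal.ofReal_mul (Real.exp_nonneg _)]
      rw [hind, hW]
      unfold s7F
      ring
    · rw [s7ind_of_not_mem hω, zero_mul, zero_mul]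
  have hFZ : Measurable fun ω => s7F γ θs y n (s7ext x0 q) (fun k => D k ω) :=
    (s7F_meas hγ θs y n _).comp (measurable_pi_lambda _ hD)
  rw [lintegral_congr hpt, s7indepA hX hD hindX x0 n q hρm, lintegral_mul_const _ hFZ]

lemma s7step {P : Measure Ω} [IsProbabilityMeasure P]
    (hX : ∀ n, Measurable (X n)) (hD : ∀ n, Measurable (D n))
    (hindX : IndepFun (fun ω (n : ℕ) => X n ω) (fun ω (n : ℕ) => D n ω) P)
    (hDindep : iIndepFun D P)
    (hγ : ∀ x, Measurable (γ x)) (u' : S → ℝ) (hu'nn : ∀ z, 0 ≤ u' z)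
    (θs y : ℝ) (x0 : S) (K : Matrix S S ℝ) (hKnn : ∀ a z, 0 ≤ K a z)
    (M : S → ℝ) (hMnn : ∀ z, 0 ≤ M z)
    (hgval : ∀ (k : ℕ) (z : S),
      ∫⁻ ω, ENNReal.ofReal (Real.exp (θs * γ z (D k ω).1) * u' z) ∂P
        = ENNReal.ofReal (M z * u' z))
    (hu : ∀ a, (∑ z, K a z * (M z * u' z)) = u' a)
    (hMcyl : ∀ (m : ℕ) (q' : Fin (m + 1) → S) (z : S),
      P (s7cyl X x0 (m + 1) (Fin.snoc q' z))
        = P (s7cyl X x0 m q') * ENNReal.ofReal (K (s7ext x0 q' m) z))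
    (n : ℕ) :
    ∫⁻ ω, s7ind (s7E γ X D y n) ω * s7W γ X D u' θs (n + 1) ω ∂P
      = ∑ q : Fin (n + 1) → S, P (s7cyl X x0 n q) *
          ((∫⁻ ω, s7F γ θs y n (s7ext x0 q) (fun k => D k ω) ∂P)
            * ENNReal.ofReal (u' (s7ext x0 q n))) := by
  have hfm : Measurable (fun ω => s7ind (s7E γ X D y n) ω * s7W γ X D u' θs (n + 1) ω) :=
    (s7ind_meas (s7E_meas hγ hX hD y n)).mul (s7W_meas hγ hX hD u' θs (n + 1))
  have hterm : ∀ q : Fin (n + 2) → S,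
      ∫⁻ ω, s7ind (s7cyl X x0 (n + 1) q) ω *
          (s7ind (s7E γ X D y n) ω * s7W γ X D u' θs (n + 1) ω) ∂P
        = P (s7cyl X x0 (n + 1) q) *
            ((∫⁻ ω, s7F γ θs y n (s7ext x0 q) (fun k => D k ω) ∂P)
              * ENNReal.ofReal (M (s7ext x0 q (n + 1)) * u' (s7ext x0 q (n + 1)))) := by
    intro q
    set xp := s7ext x0 q with hxp
    set g : ℝ × ℝ → ℝ≥0∞ :=
      fun p => ENNReal.ofReal (Real.exp (θs * γ (xp (n + 1)) p.1) * u' (xp (n + 1))) with hg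
    have hgm : Measurable g := ENNReal.measurable_ofReal.comp
      (((((hγ _).comp measurable_fst).const_mul θs).exp).mul_const _)
    have hpt : ∀ ω, s7ind (s7cyl X x0 (n + 1) q) ω *
        (s7ind (s7E γ X D y n) ω * s7W γ X D u' θs (n + 1) ω)
        = s7ind (s7cyl X x0 (n + 1) q) ω *
            (s7F γ θs y n xp (fun k => D k ω) * g (D n ω)) := by
      intro ω
      by_cases hω : ω ∈ s7cyl X x0 (n + 1) q
      · have hXeq : ∀ i ≤ n + 1, X i ω = xp i := hω
        have hSp : ∀ k ≤ n + 1, s7Spd γ X D k ω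
            = ∑ j ∈ Finset.range k, γ (xp (j + 1)) (D j ω).1 := by
          intro k hk
          exact Finset.sum_congr rfl fun j hj => by
            rw [hXeq (j + 1) (by have := Finset.mem_range.1 hj; omega)]
        have hind : s7ind (s7E γ X D y n) ω
            = s7ind {w : ℕ → ℝ × ℝ | ∀ k ≤ n,
                ∑ j ∈ Finset.range k, γ (xp (j + 1)) (w j).1 ≤ y} (fun k => D k ω) := by
          refine s7ind_congr ⟨fun hm k hk => ?_, fun hm k hk => ?_⟩
          · rw [← hSp k (by omega)]; exact hm k hk
          · rw [hSp k (by omega)]; exact hm k hk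
        have hW : s7W γ X D u' θs (n + 1) ω
            = ENNReal.ofReal (Real.exp (θs * ∑ j ∈ Finset.range n,
                γ (xp (j + 1)) (D j ω).1)) * g (D n ω) := by
          unfold s7W
          rw [hSp (n + 1) le_rfl, hXeq (n + 1) le_rfl, Finset.sum_range_succ, mul_add,
            Real.exp_add, mul_assoc, ENNReal.ofReal_mul (Real.exp_nonneg _)]
        rw [hind, hW]
        unfold s7F
        ring
      · rw [s7ind_of_not_mem hω, zero_mul, zero_mul]
    have hρm : Measurable (fun v : ℕ → ℝ × ℝ => s7F γ θs y n xp v * g (v n)) :=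
      (s7F_meas hγ θs y n xp).mul (hgm.comp (measurable_pi_apply n))
    have hA := s7indepA hX hD hindX x0 (n + 1) q
      (ρ := fun v => s7F γ θs y n xp v * g (v n)) hρm
    simp only [] at hA
    rw [lintegral_congr hpt, hA,
      s7indepB hD hDindep n (s7F_meas hγ θs y n xp)
        (fun v v' h => s7F_congr_v θs y n xp h) hgm]
    have hgv : ∫⁻ ω, g (D n ω) ∂P = ENNReal.ofReal (M (xp (n + 1)) * u' (xp (n + 1))) := by
      simp only [hg]
      exact hgval n (xp (n + 1))
    rw [hgv]
  calc ∫⁻ ω, s7ind (s7E γ X D y n) ω * s7W γ X D u' θs (n + 1) ω ∂P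
      = ∑ q : Fin (n + 2) → S, ∫⁻ ω, s7ind (s7cyl X x0 (n + 1) q) ω *
          (s7ind (s7E γ X D y n) ω * s7W γ X D u' θs (n + 1) ω) ∂P :=
        s7sum_cyl hX x0 (n + 1) hfm
    _ = ∑ q : Fin (n + 2) → S, P (s7cyl X x0 (n + 1) q) *
          ((∫⁻ ω, s7F γ θs y n (s7ext x0 q) (fun k => D k ω) ∂P)
            * ENNReal.ofReal (M (s7ext x0 q (n + 1)) * u' (s7ext x0 q (n + 1)))) :=
        Finset.sum_congr rfl fun q _ => hterm q
    _ = ∑ q : Fin (n + 1) → S, P (s7cyl X x0 n q) *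
          ((∫⁻ ω, s7F γ θs y n (s7ext x0 q) (fun k => D k ω) ∂P)
            * ENNReal.ofReal (u' (s7ext x0 q n))) := by
        rw [← Equiv.sum_comp (Fin.snocEquiv (fun _ : Fin (n + 2) => S))]
        rw [Fintype.sum_prod_type]
        rw [Finset.sum_comm]
        refine Finset.sum_congr rfl fun q' _ => ?_
        have hz : ∀ z : S,
            P (s7cyl X x0 (n + 1) ((Fin.snocEquiv (fun _ : Fin (n + 2) => S)) (z, q'))) *
              ((∫⁻ ω, s7F γ θs y n
                  (s7ext x0 ((Fin.snocEquiv (fun _ : Fin (n + 2) => S)) (z, q')))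
                  (fun k => D k ω) ∂P)
                * ENNReal.ofReal
                    (M (s7ext x0 ((Fin.snocEquiv (fun _ : Fin (n + 2) => S)) (z, q')) (n + 1)) *
                     u' (s7ext x0 ((Fin.snocEquiv (fun _ : Fin (n + 2) => S)) (z, q')) (n + 1))))
            = (P (s7cyl X x0 n q') *
                (∫⁻ ω, s7F γ θs y n (s7ext x0 q') (fun k => D k ω) ∂P)) *
                ENNReal.ofReal (K (s7ext x0 q' n) z * (M z * u' z)) := by
          intro z
          have he : (Fin.snocEquiv (fun _ : Fin (n + 2) => S)) (z, q')
              = (Fin.snoc q' z : Fin (n + 2) → S) := rfl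
          rw [he]
          have h1 : s7ext x0 (Fin.snoc q' z : Fin (n + 2) → S) (n + 1) = z :=
            s7ext_snoc_last x0 q' z
          have h2 : s7F γ θs y n (s7ext x0 (Fin.snoc q' z : Fin (n + 2) → S))
              = s7F γ θs y n (s7ext x0 q') :=
            s7F_congr_xp θs y n fun j hj => s7ext_snoc_lt x0 q' z (by omega)
          rw [hMcyl n q' z, h1, h2, ENNReal.ofReal_mul (hKnn _ _)]
          ring
        rw [Finset.sum_congr rfl fun z _ => hz z, ← Finset.mul_sum,
          ← ENNReal.ofReal_sum_of_nonneg
            (fun z _ => mul_nonneg (hKnn _ _) (mul_nonneg (hMnn z) (hu'nn z))),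
          hu (s7ext x0 q' n), mul_assoc]

/-- Lundberg-type bound: the probability that the additive functional ever exceeds `y` is at
most `(u(x0)/min u) e^{-θ* y}`, via the eigenfunction supermartingale. -/
lemma s7main {P : Measure Ω} [IsProbabilityMeasure P]
    (hX : ∀ n, Measurable (X n)) (hD : ∀ n, Measurable (D n))
    (hindX : IndepFun (fun ω (n : ℕ) => X n ω) (fun ω (n : ℕ) => D n ω) P)
    (hDindep : iIndepFun D P)
    (hγ : ∀ x, Measurable (γ x)) (u' : S → ℝ) (hup : ∀ z, 0 < u' z)
    (θs : ℝ) (hθs : 0 < θs) (x0 : S) (hX0 : ∀ᵐ ω ∂P, X 0 ω = x0)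
    (K : Matrix S S ℝ) (hKnn : ∀ a z, 0 ≤ K a z)
    (M : S → ℝ) (hMnn : ∀ z, 0 ≤ M z)
    (hgval : ∀ (k : ℕ) (z : S),
      ∫⁻ ω, ENNReal.ofReal (Real.exp (θs * γ z (D k ω).1) * u' z) ∂P
        = ENNReal.ofReal (M z * u' z))
    (hu : ∀ a, (∑ z, K a z * (M z * u' z)) = u' a)
    (hMcyl : ∀ (m : ℕ) (q' : Fin (m + 1) → S) (z : S),
      P (s7cyl X x0 (m + 1) (Fin.snoc q' z))
        = P (s7cyl X x0 m q') * ENNReal.ofReal (K (s7ext x0 q' m) z))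
    (zm : S) (hzm : ∀ z, u' zm ≤ u' z)
    (y : ℝ) (hy : 0 ≤ y) :
    P {ω | ∃ n, y < s7Spd γ X D n ω}
      ≤ ENNReal.ofReal (u' x0 / u' zm * Real.exp (-(θs * y))) := by
  have key : ∀ n, ∫⁻ ω, s7ind (s7E γ X D y n) ω * s7W γ X D u' θs (n + 1) ω ∂P
      = ∫⁻ ω, s7ind (s7E γ X D y n) ω * s7W γ X D u' θs n ω ∂P := fun n =>
    (s7step hX hD hindX hDindep hγ u' (fun z => (hup z).le) θs y x0 K hKnn M hMnn
      hgval hu hMcyl n).trans (s7rep hX hD hindX hγ u' θs y x0 n).symm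
  have hEmeas := s7E_meas hγ hX hD y
  have hWmeas := s7W_meas hγ hX hD u' θs
  set Gn : ℕ → Set Ω := fun n => s7E γ X D y n ∩ {ω | y < s7Spd γ X D (n + 1) ω} with hGn
  have hGmeas : ∀ n, MeasurableSet (Gn n) := fun n =>
    (hEmeas n).inter (measurableSet_lt measurable_const (s7Spd_meas hγ hX hD (n + 1)))
  set aN : ℕ → ℝ≥0∞ :=
    fun n => ∫⁻ ω, s7ind (s7E γ X D y n) ω * s7W γ X D u' θs n ω ∂P with haN
  set bN : ℕ → ℝ≥0∞ :=
    fun n => ∫⁻ ω, s7ind (Gn n) ω * s7W γ X D u' θs (n + 1) ω ∂P with hbN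
  have mono : ∀ n, aN (n + 1) + bN n ≤ aN n := by
    intro n
    have hle : ∀ ω, s7ind (s7E γ X D y (n + 1)) ω * s7W γ X D u' θs (n + 1) ω
        + s7ind (Gn n) ω * s7W γ X D u' θs (n + 1) ω
        ≤ s7ind (s7E γ X D y n) ω * s7W γ X D u' θs (n + 1) ω := by
      intro ω
      by_cases hg : ω ∈ Gn n
      · have hE1 : ω ∉ s7E γ X D y (n + 1) := fun hmem =>
          absurd (hmem (n + 1) le_rfl) (not_le.2 hg.2)
        rw [s7ind_of_not_mem hE1, s7ind_of_mem hg, s7ind_of_mem hg.1, zero_mul, zero_add,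
          one_mul]
      · rw [s7ind_of_not_mem hg, zero_mul, add_zero]
        by_cases hE1 : ω ∈ s7E γ X D y (n + 1)
        · have hE0 : ω ∈ s7E γ X D y n := fun k hk => hE1 k (by omega)
          rw [s7ind_of_mem hE1, s7ind_of_mem hE0]
        · rw [s7ind_of_not_mem hE1, zero_mul]; exact zero_le
    calc aN (n + 1) + bN n
        = ∫⁻ ω, (s7ind (s7E γ X D y (n + 1)) ω * s7W γ X D u' θs (n + 1) ω
            + s7ind (Gn n) ω * s7W γ X D u' θs (n + 1) ω) ∂P :=
          (lintegral_add_left ((s7ind_meas (hEmeas (n + 1))).mul (hWmeas (n + 1))) _).symm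
      _ ≤ ∫⁻ ω, s7ind (s7E γ X D y n) ω * s7W γ X D u' θs (n + 1) ω ∂P := lintegral_mono hle
      _ = aN n := key n
  have chain : ∀ N, aN N + ∑ k ∈ Finset.range N, bN k ≤ aN 0 := by
    intro N
    induction N with
    | zero => simp
    | succ m ih =>
      calc aN (m + 1) + ∑ k ∈ Finset.range (m + 1), bN k
          = (aN (m + 1) + bN m) + ∑ k ∈ Finset.range m, bN k := by
            rw [Finset.sum_range_succ]; ring
        _ ≤ aN m + ∑ k ∈ Finset.range m, bN k := add_le_add_left (mono m) _
        _ ≤ aN 0 := ih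
  have a0 : aN 0 = ENNReal.ofReal (u' x0) := by
    have hpt : ∀ᵐ ω ∂P, s7ind (s7E γ X D y 0) ω * s7W γ X D u' θs 0 ω
        = ENNReal.ofReal (u' x0) := by
      filter_upwards [hX0] with ω h0
      have hmem : ω ∈ s7E γ X D y 0 := by
        intro k hk
        have hk0 : k = 0 := Nat.le_zero.mp hk
        subst hk0
        show s7Spd γ X D 0 ω ≤ y
        unfold s7Spd
        simpa using hy
      rw [s7ind_of_mem hmem, one_mul]
      unfold s7W s7Spd
      simp [h0]
    simp only [haN]
    rw [lintegral_congr_ae hpt, lintegral_const, measure_univ, mul_one]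
  have bn_ge : ∀ n, ENNReal.ofReal (Real.exp (θs * y) * u' zm) * P (Gn n) ≤ bN n := by
    intro n
    have hpt : ∀ ω, s7ind (Gn n) ω * ENNReal.ofReal (Real.exp (θs * y) * u' zm)
        ≤ s7ind (Gn n) ω * s7W γ X D u' θs (n + 1) ω := by
      intro ω
      by_cases hg : ω ∈ Gn n
      · rw [s7ind_of_mem hg, one_mul, one_mul]
        refine ENNReal.ofReal_le_ofReal ?_
        have h1 : y < s7Spd γ X D (n + 1) ω := hg.2
        exact mul_le_mul (Real.exp_le_exp.2 (mul_le_mul_of_nonneg_left h1.le hθs.le))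
          (hzm _) (hup zm).le (Real.exp_nonneg _)
      · rw [s7ind_of_not_mem hg, zero_mul, zero_mul]
    calc ENNReal.ofReal (Real.exp (θs * y) * u' zm) * P (Gn n)
        = ∫⁻ ω, s7ind (Gn n) ω * ENNReal.ofReal (Real.exp (θs * y) * u' zm) ∂P := by
          rw [lintegral_mul_const _ (s7ind_meas (hGmeas n)),
            show (∫⁻ ω, s7ind (Gn n) ω ∂P) = P (Gn n) from lintegral_indicator_one (hGmeas n),
            mul_comm]
      _ ≤ bN n := lintegral_mono hpt
  have hsub : {ω | ∃ n, y < s7Spd γ X D n ω} ⊆ ⋃ n, Gn n := by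
    intro ω hω
    obtain ⟨n0, hn0⟩ := hω
    have hne : {n | y < s7Spd γ X D n ω}.Nonempty := ⟨n0, hn0⟩
    have hNmem : y < s7Spd γ X D (sInf {n | y < s7Spd γ X D n ω}) ω := Nat.sInf_mem hne
    have hNpos : sInf {n | y < s7Spd γ X D n ω} ≠ 0 := by
      intro h0
      rw [h0] at hNmem
      have h00 : s7Spd γ X D 0 ω = 0 := by unfold s7Spd; simp
      rw [h00] at hNmem; linarith
    obtain ⟨m, hm⟩ := Nat.exists_eq_succ_of_ne_zero hNpos
    refine Set.mem_iUnion.2 ⟨m, ⟨?_, ?_⟩⟩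
    · intro k hk
      by_contra hcon
      push_neg at hcon
      have hle := Nat.sInf_le (show k ∈ {n | y < s7Spd γ X D n ω} from hcon)
      omega
    · show y < s7Spd γ X D (m + 1) ω
      have hm1 : m + 1 = sInf {n | y < s7Spd γ X D n ω} := by omega
      rw [hm1]
      exact hNmem
  have PA : P {ω | ∃ n, y < s7Spd γ X D n ω} ≤ ∑' n, P (Gn n) :=
    le_trans (measure_mono hsub) (measure_iUnion_le _)
  have tsum_b : (∑' n, bN n) ≤ ENNReal.ofReal (u' x0) := by
    rw [ENNReal.tsum_eq_iSup_nat]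
    exact iSup_le fun N => le_trans (le_trans le_add_self (chain N)) (le_of_eq a0)
  have final1 : ENNReal.ofReal (Real.exp (θs * y) * u' zm) * P {ω | ∃ n, y < s7Spd γ X D n ω}
      ≤ ENNReal.ofReal (u' x0) := by
    calc ENNReal.ofReal (Real.exp (θs * y) * u' zm) * P {ω | ∃ n, y < s7Spd γ X D n ω}
        ≤ ENNReal.ofReal (Real.exp (θs * y) * u' zm) * ∑' n, P (Gn n) :=
          mul_le_mul_right PA _
      _ = ∑' n, ENNReal.ofReal (Real.exp (θs * y) * u' zm) * P (Gn n) :=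
          ENNReal.tsum_mul_left.symm
      _ ≤ ∑' n, bN n := ENNReal.tsum_le_tsum bn_ge
      _ ≤ ENNReal.ofReal (u' x0) := tsum_b
  have hC0 : (0 : ℝ) < Real.exp (θs * y) * u' zm := mul_pos (Real.exp_pos _) (hup zm)
  have hne0 : ENNReal.ofReal (Real.exp (θs * y) * u' zm) ≠ 0 := by
    simp only [ne_eq, ENNReal.ofReal_eq_zero, not_le]
    exact hC0
  have hPA : P {ω | ∃ n, y < s7Spd γ X D n ω}
      ≤ ENNReal.ofReal (u' x0) / ENNReal.ofReal (Real.exp (θs * y) * u' zm) :=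
    (ENNReal.le_div_iff_mul_le (Or.inl hne0) (Or.inl ENNReal.ofReal_ne_top)).2
      (by rw [mul_comm]; exact final1)
  refine hPA.trans (le_of_eq ?_)
  rw [← ENNReal.ofReal_div_of_pos hC0]
  congr 1
  rw [Real.exp_neg, mul_comm (Real.exp (θs * y)) (u' zm), div_mul_eq_div_div, div_eq_mul_inv]

/-- Under Assumptions 1 and 2, with `σ(y) = inf{n ≥ 0 : S_n > y}`, there is `c ∈ (0,∞)` such
that for all `y ≥ 0`,
`E_{x₀}[exp(-θ* S_{σ(y)}) (u_{θ*}(x₀)/u_{θ*}(X_{σ(y)})) 1(σ(y) < ∞)] ≤ c exp(-2θ* y)`.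
This quantity is the second moment of the exponentially tilted importance sampling estimator of
`P_{x₀}(max_n S_n > y)`, so that estimator is strongly efficient. -/
theorem stmt_7
    {S : Type} [Fintype S] [DecidableEq S] [Nonempty S]
    [MeasurableSpace S] [MeasurableSingletonClass S]
    {Ω : Type} [mΩ : MeasurableSpace Ω] (P : Measure Ω) [IsProbabilityMeasure P]
    -- the transition matrix: stochastic and irreducible
    (K : Matrix S S ℝ) (hKnn : ∀ x y, 0 ≤ K x y) (hKrow : ∀ x, ∑ y, K x y = 1)
    (hKirr : ∀ x y, ∃ n : ℕ, 0 < (K ^ n) x y)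
    -- the modulating Markov chain, started at x0, and the i.i.d. drivers
    (X : ℕ → Ω → S) (hXmeas : ∀ n, Measurable (X n))
    (ξ η : ℕ → Ω → ℝ) (hξmeas : ∀ n, Measurable (ξ n)) (hηmeas : ∀ n, Measurable (η n))
    (x0 : S) (hX0 : ∀ᵐ ω ∂P, X 0 ω = x0)
    (hMarkov : ∀ (n : ℕ) (x : ℕ → S),
      P {ω | ∀ i ≤ n + 1, X i ω = x i}
        = P {ω | ∀ i ≤ n, X i ω = x i} * ENNReal.ofReal (K (x n) (x (n + 1))))
    (hiid : ∀ n : ℕ, 1 ≤ n →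
      Measure.map (fun ω => (ξ n ω, η n ω)) P = Measure.map (fun ω => (ξ 1 ω, η 1 ω)) P)
    (hindep : iIndepFun
      (fun (n : ℕ) (ω : Ω) => (ξ (n + 1) ω, η (n + 1) ω)) P)
    (hindX : IndepFun (fun ω (n : ℕ) => X n ω) (fun ω (n : ℕ) => (ξ (n + 1) ω, η (n + 1) ω)) P)
    -- discount and reward rate functions (rewards nonnegative)
    (γ lam : S → ℝ → ℝ) (hγm : ∀ x, Measurable (γ x)) (hlamm : ∀ x, Measurable (lam x))
    (hlamnn : ∀ x v, 0 ≤ lam x v)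
    -- the accumulated rate process S_n = Σ_{k=1}^n γ(X_k, ξ_k), S_0 = 0
    (Sp : ℕ → Ω → ℝ)
    (hSp : ∀ n ω, Sp n ω = ∑ k ∈ Finset.range n, γ (X (k + 1) ω) (ξ (k + 1) ω))
    -- Perron-Frobenius eigenfunctions u_θ > 0 and eigenvalue exp(ψ(θ)):
    -- u_θ(x) = E_x[exp(θ γ(X₁,ξ₁) - ψ(θ)) u_θ(X₁)] whenever the mgf is finite
    (u : ℝ → S → ℝ) (ψ : ℝ → ℝ) (hupos : ∀ θ x, 0 < u θ x)
    (heig : ∀ θ : ℝ, (∀ x, Integrable (fun ω => exp (θ * γ x (ξ 1 ω))) P) →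
      ∀ x : S, u θ x = ∑ y, K x y * ((∫ ω, exp (θ * γ y (ξ 1 ω)) ∂P) * exp (-ψ θ) * u θ y))
    -- Assumption 1: finite exponential moments in a neighborhood of the origin
    (hA1 : ∃ ε > (0 : ℝ), ∀ θ : ℝ, |θ| ≤ ε →
      ∀ x, Integrable (fun ω => exp (θ * γ x (ξ 1 ω))) P)
    -- Assumption 2 (Cramér): ψ(θ*) = 0 for some θ* > 0 and ψ(θ) < ∞ for some θ > θ*
    (θs : ℝ) (hθspos : 0 < θs) (hψ0 : ψ θs = 0)
    (hA2 : ∃ θp > θs, ∀ θ ∈ Set.Icc (0 : ℝ) θp,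
      ∀ x, Integrable (fun ω => exp (θ * γ x (ξ 1 ω))) P)
    :
    ∃ c > (0 : ℝ), ∀ y : ℝ, 0 ≤ y →
      ∫⁻ ω in {ω | ∃ n : ℕ, y < Sp n ω},
          ENNReal.ofReal
            (exp (-(θs * Sp (sInf {n : ℕ | y < Sp n ω}) ω)) *
              (u θs x0 / u θs (X (sInf {n : ℕ | y < Sp n ω}) ω))) ∂P
        ≤ ENNReal.ofReal (c * exp (-(2 * θs * y))) := by
  classical
  obtain ⟨θp, hθpgt, hIntI⟩ := hA2
  have hint : ∀ x, Integrable (fun ω => exp (θs * γ x (ξ 1 ω))) P :=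
    hIntI θs ⟨hθspos.le, hθpgt.le⟩
  obtain ⟨zm, _, hzm'⟩ := Finset.exists_min_image (Finset.univ : Finset S) (u θs)
    Finset.univ_nonempty
  have hzm : ∀ z, u θs zm ≤ u θs z := fun z => hzm' z (Finset.mem_univ z)
  refine ⟨(u θs x0 / u θs zm) ^ 2,
    pow_pos (div_pos (hupos θs x0) (hupos θs zm)) 2, fun y hy => ?_⟩
  have hD : ∀ n : ℕ, Measurable ((fun (n : ℕ) (ω : Ω) => (ξ (n + 1) ω, η (n + 1) ω)) n) :=
    fun n => (hξmeas _).prodMk (hηmeas _)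
  -- value of the one-step exponential integral
  have hgval : ∀ (k : ℕ) (z : S),
      ∫⁻ ω, ENNReal.ofReal (exp (θs * γ z (ξ (k + 1) ω)) * u θs z) ∂P
        = ENNReal.ofReal ((∫ ω, exp (θs * γ z (ξ 1 ω)) ∂P) * u θs z) := by
    intro k z
    have hm1 : Measurable (fun p : ℝ × ℝ => ENNReal.ofReal (exp (θs * γ z p.1) * u θs z)) :=
      ENNReal.measurable_ofReal.comp
        (((((hγm z).comp measurable_fst).const_mul θs).exp).mul_const _)
    have hDk : Measurable (fun ω => (ξ (k + 1) ω, η (k + 1) ω)) :=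
      (hξmeas _).prodMk (hηmeas _)
    have h1m : Measurable (fun ω => (ξ 1 ω, η 1 ω)) := (hξmeas _).prodMk (hηmeas _)
    calc ∫⁻ ω, ENNReal.ofReal (exp (θs * γ z (ξ (k + 1) ω)) * u θs z) ∂P
        = ∫⁻ p, ENNReal.ofReal (exp (θs * γ z p.1) * u θs z)
            ∂(Measure.map (fun ω => (ξ (k + 1) ω, η (k + 1) ω)) P) :=
          (lintegral_map hm1 hDk).symm
      _ = ∫⁻ p, ENNReal.ofReal (exp (θs * γ z p.1) * u θs z)
            ∂(Measure.map (fun ω => (ξ 1 ω, η 1 ω)) P) := by rw [hiid (k + 1) (by omega)]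
      _ = ∫⁻ ω, ENNReal.ofReal (exp (θs * γ z (ξ 1 ω)) * u θs z) ∂P := lintegral_map hm1 h1m
      _ = ENNReal.ofReal (∫ ω, exp (θs * γ z (ξ 1 ω)) * u θs z ∂P) :=
          (ofReal_integral_eq_lintegral_ofReal ((hint z).mul_const _)
            (ae_of_all _ fun ω => mul_nonneg (exp_nonneg _) (hupos θs z).le)).symm
      _ = ENNReal.ofReal ((∫ ω, exp (θs * γ z (ξ 1 ω)) ∂P) * u θs z) := by
          rw [integral_mul_const]
  -- eigenvalue relation at θ*
  have huu : ∀ a : S,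
      (∑ z, K a z * ((∫ ω, exp (θs * γ z (ξ 1 ω)) ∂P) * u θs z)) = u θs a := by
    intro a
    have h := heig θs hint a
    simp only [hψ0, neg_zero, Real.exp_zero, mul_one] at h
    exact h.symm
  -- Markov property on cylinders
  have hMcyl : ∀ (m : ℕ) (q' : Fin (m + 1) → S) (z : S),
      P (s7cyl X x0 (m + 1) (Fin.snoc q' z))
        = P (s7cyl X x0 m q') * ENNReal.ofReal (K (s7ext x0 q' m) z) := by
    intro m q' z
    have h := hMarkov m (s7ext x0 (Fin.snoc q' z : Fin (m + 2) → S))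
    have e2 : {ω | ∀ i ≤ m, X i ω = s7ext x0 (Fin.snoc q' z : Fin (m + 2) → S) i}
        = s7cyl X x0 m q' := by
      ext ω
      constructor <;> intro hw i hi
      · rw [← s7ext_snoc_lt x0 q' z hi]; exact hw i hi
      · rw [s7ext_snoc_lt x0 q' z hi]; exact hw i hi
    have e3 : s7ext x0 (Fin.snoc q' z : Fin (m + 2) → S) m = s7ext x0 q' m :=
      s7ext_snoc_lt x0 q' z le_rfl
    have e4 : s7ext x0 (Fin.snoc q' z : Fin (m + 2) → S) (m + 1) = z :=
      s7ext_snoc_last x0 q' z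
    rw [e2, e3, e4] at h
    exact h
  -- the Lundberg bound
  have hLund := s7main (D := fun (n : ℕ) (ω : Ω) => (ξ (n + 1) ω, η (n + 1) ω))
    hXmeas hD hindX hindep hγm (u θs) (hupos θs) θs hθspos x0 hX0 K hKnn
    (fun z => ∫ ω, exp (θs * γ z (ξ 1 ω)) ∂P)
    (fun z => integral_nonneg fun ω => exp_nonneg _) hgval huu hMcyl zm hzm y hy
  -- translate between `Sp` and `s7Spd`
  have hSpd : ∀ (n : ℕ) (ω : Ω),
      Sp n ω = s7Spd γ X (fun (n : ℕ) (ω : Ω) => (ξ (n + 1) ω, η (n + 1) ω)) n ω :=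
    fun n ω => hSp n ω
  have hAeq : {ω | ∃ n : ℕ, y < Sp n ω}
      = {ω | ∃ n : ℕ, y < s7Spd γ X (fun (n : ℕ) (ω : Ω) => (ξ (n + 1) ω, η (n + 1) ω)) n ω} := by
    ext ω
    simp only [Set.mem_setOf_eq]
    constructor <;> rintro ⟨n, hn⟩ <;> exact ⟨n, by rw [hSpd] at *; exact hn⟩
  have hAm : MeasurableSet {ω | ∃ n : ℕ, y < Sp n ω} := by
    have h1 : {ω | ∃ n : ℕ, y < Sp n ω} = ⋃ n : ℕ, {ω | y < Sp n ω} := by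
      ext ω; simp
    rw [h1]
    refine MeasurableSet.iUnion fun n => measurableSet_lt measurable_const ?_
    have h2 : Sp n = s7Spd γ X (fun (n : ℕ) (ω : Ω) => (ξ (n + 1) ω, η (n + 1) ω)) n :=
      funext (hSpd n)
    rw [h2]
    exact s7Spd_meas hγm hXmeas hD n
  have hPA : P {ω | ∃ n : ℕ, y < Sp n ω}
      ≤ ENNReal.ofReal (u θs x0 / u θs zm * exp (-(θs * y))) := by
    rw [hAeq]; exact hLund
  -- pointwise bound on the stopped integrand
  have hbound : ∀ ω ∈ {ω | ∃ n : ℕ, y < Sp n ω},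
      ENNReal.ofReal (exp (-(θs * Sp (sInf {n : ℕ | y < Sp n ω}) ω)) *
          (u θs x0 / u θs (X (sInf {n : ℕ | y < Sp n ω}) ω)))
        ≤ ENNReal.ofReal (exp (-(θs * y)) * (u θs x0 / u θs zm)) := by
    intro ω hω
    have hne : {n : ℕ | y < Sp n ω}.Nonempty := hω
    have hmem : y < Sp (sInf {n : ℕ | y < Sp n ω}) ω := Nat.sInf_mem hne
    refine ENNReal.ofReal_le_ofReal (mul_le_mul ?_ ?_ ?_ (exp_nonneg _))
    · refine Real.exp_le_exp.2 (neg_le_neg ?_)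
      exact mul_le_mul_of_nonneg_left hmem.le hθspos.le
    · exact div_le_div_of_nonneg_left (hupos θs x0).le (hupos θs zm) (hzm _)
    · exact div_nonneg (hupos θs x0).le (hupos θs _).le
  calc ∫⁻ ω in {ω | ∃ n : ℕ, y < Sp n ω},
          ENNReal.ofReal
            (exp (-(θs * Sp (sInf {n : ℕ | y < Sp n ω}) ω)) *
              (u θs x0 / u θs (X (sInf {n : ℕ | y < Sp n ω}) ω))) ∂P
      ≤ ∫⁻ _ω in {ω | ∃ n : ℕ, y < Sp n ω},
          ENNReal.ofReal (exp (-(θs * y)) * (u θs x0 / u θs zm)) ∂P :=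
        setLIntegral_mono' hAm hbound
    _ = ENNReal.ofReal (exp (-(θs * y)) * (u θs x0 / u θs zm))
          * P {ω | ∃ n : ℕ, y < Sp n ω} := setLIntegral_const _ _
    _ ≤ ENNReal.ofReal (exp (-(θs * y)) * (u θs x0 / u θs zm))
          * ENNReal.ofReal (u θs x0 / u θs zm * exp (-(θs * y))) := mul_le_mul_right hPA _
    _ = ENNReal.ofReal ((u θs x0 / u θs zm) ^ 2 * exp (-(2 * θs * y))) := by
        rw [← ENNReal.ofReal_mul (mul_nonneg (exp_nonneg _) (div_nonneg (hupos θs x0).le (hupos θs zm).le))]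
        congr 1
        have he : exp (-(θs * y)) * exp (-(θs * y)) = exp (-(2 * θs * y)) := by
          rw [← Real.exp_add]; congr 1; ring
        calc exp (-(θs * y)) * (u θs x0 / u θs zm) * (u θs x0 / u θs zm * exp (-(θs * y)))
            = (u θs x0 / u θs zm) ^ 2 * (exp (-(θs * y)) * exp (-(θs * y))) := by ring
          _ = (u θs x0 / u θs zm) ^ 2 * exp (-(2 * θs * y)) := by rw [he]
end Stmt7Aux
end

section
/- Let Z be a Gamma random variable with shape θ* > 0 and rate λ > 0 and let D = 1/Z. Then for every Δ > 0, P(D > 1/Δ) = exp(−λΔ) λ^{θ*} Δ^{θ*}/(θ* Γ(θ*)) + R(Δ), where 0 ≤ R(Δ) ≤ λ^{θ*+1} Δ^{θ*+1}/(θ*(θ*+1)Γ(θ*)). In particular Δ^{−θ*} P(D > 1/Δ) → λ^{θ*}/(θ* Γ(θ*)) as Δ → 0, so D is regularly varying with index θ*. -/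
open MeasureTheory ProbabilityTheory Real

lemma aux_preimage (Δ : ℝ) (hΔ : 0 < Δ) :
    (fun z : ℝ => z⁻¹) ⁻¹' Set.Ioi (1 / Δ) = Set.Ioo 0 Δ := by
  ext z
  simp only [Set.mem_preimage, Set.mem_Ioi, Set.mem_Ioo, one_div]
  constructor
  · intro h
    have hz : 0 < z⁻¹ := lt_trans (inv_pos.mpr hΔ) h
    have hz0 : 0 < z := inv_pos.mp hz
    exact ⟨hz0, by rwa [inv_lt_inv₀ hΔ hz0] at h⟩
  · rintro ⟨h0, h1⟩
    rwa [inv_lt_inv₀ hΔ h0]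

lemma aux_int (θs lam : ℝ) (hθ : 0 < θs) (hlam : 0 < lam) (Δ : ℝ) (hΔ : 0 < Δ) :
    IntervalIntegrable (fun z => exp (-(lam * z)) * lam ^ θs * z ^ (θs - 1) / Real.Gamma θs)
      volume 0 Δ := by
  have base : IntervalIntegrable (fun z : ℝ => z ^ (θs - 1)) volume 0 Δ :=
    intervalIntegral.intervalIntegrable_rpow' (by linarith)
  have hc : ContinuousOn (fun z : ℝ => exp (-(lam * z)) * lam ^ θs / Real.Gamma θs)
      (Set.uIcc 0 Δ) := by fun_prop
  have := base.continuousOn_mul hc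
  convert this using 2 with z
  ring

lemma aux_val (θs lam : ℝ) (hθ : 0 < θs) (hlam : 0 < lam) (Δ : ℝ) (hΔ : 0 < Δ) :
    ((MeasureTheory.volume.withDensity fun z =>
      ENNReal.ofReal
        (if 0 < z then exp (-(lam * z)) * lam ^ θs * z ^ (θs - 1) / Real.Gamma θs else 0))
        (Set.Ioo 0 Δ)).toReal
      = ∫ z in (0:ℝ)..Δ, exp (-(lam * z)) * lam ^ θs * z ^ (θs - 1) / Real.Gamma θs := by
  have hΓ : 0 < Real.Gamma θs := Real.Gamma_pos_of_pos hθ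
  set f : ℝ → ℝ := fun z =>
    if 0 < z then exp (-(lam * z)) * lam ^ θs * z ^ (θs - 1) / Real.Gamma θs else 0 with hf
  set g : ℝ → ℝ := fun z => exp (-(lam * z)) * lam ^ θs * z ^ (θs - 1) / Real.Gamma θs with hg
  have h_eq : ∀ z ∈ Set.Ioo (0:ℝ) Δ, f z = g z := fun z hz => if_pos hz.1
  have hgint : IntegrableOn g (Set.Ioo 0 Δ) volume := by
    have := (aux_int θs lam hθ hlam Δ hΔ)
    exact ((intervalIntegrable_iff_integrableOn_Ioc_of_le hΔ.le).mp this).mono_set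
      Set.Ioo_subset_Ioc_self
  have hfint : IntegrableOn f (Set.Ioo 0 Δ) volume := hgint.congr_fun (fun z hz => (h_eq z hz).symm)
    measurableSet_Ioo
  have hmeas : Measurable f := by
    apply Measurable.ite measurableSet_Ioi
    · fun_prop
    · exact measurable_const
  rw [withDensity_apply _ measurableSet_Ioo]
  have hnn : 0 ≤ᵐ[volume.restrict (Set.Ioo 0 Δ)] f := by
    filter_upwards with z
    by_cases hz : 0 < z
    · simp only [hf, if_pos hz]
      positivity
    · simp [hf, if_neg hz]
  rw [← MeasureTheory.ofReal_integral_eq_lintegral_ofReal hfint hnn, ENNReal.toReal_ofReal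
    (MeasureTheory.integral_nonneg_of_ae hnn)]
  rw [MeasureTheory.setIntegral_congr_fun measurableSet_Ioo h_eq,
    ← MeasureTheory.integral_Ioc_eq_integral_Ioo, ← intervalIntegral.integral_of_le hΔ.le]

lemma aux_bounds (θs lam : ℝ) (hθ : 0 < θs) (hlam : 0 < lam) (Δ : ℝ) (hΔ : 0 < Δ) :
    exp (-(lam * Δ)) * lam ^ θs * Δ ^ θs / (θs * Real.Gamma θs)
      ≤ (∫ z in (0:ℝ)..Δ, exp (-(lam * z)) * lam ^ θs * z ^ (θs - 1) / Real.Gamma θs) ∧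
    (∫ z in (0:ℝ)..Δ, exp (-(lam * z)) * lam ^ θs * z ^ (θs - 1) / Real.Gamma θs)
      ≤ exp (-(lam * Δ)) * lam ^ θs * Δ ^ θs / (θs * Real.Gamma θs)
        + lam ^ (θs + 1) * Δ ^ (θs + 1) / (θs * (θs + 1) * Real.Gamma θs) := by
  have hΓ : 0 < Real.Gamma θs := Real.Gamma_pos_of_pos hθ
  have base : IntervalIntegrable (fun z : ℝ => z ^ (θs - 1)) volume 0 Δ :=
    intervalIntegral.intervalIntegrable_rpow' (by linarith)
  have hgint := aux_int θs lam hθ hlam Δ hΔ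
  -- values of power integrals
  have hI0 : (∫ z in (0:ℝ)..Δ, z ^ (θs - 1)) = Δ ^ θs / θs := by
    rw [integral_rpow (Or.inl (by linarith))]
    rw [sub_add_cancel, Real.zero_rpow (ne_of_gt hθ)]
    ring
  have hI1 : (∫ z in (0:ℝ)..Δ, z ^ θs) = Δ ^ (θs + 1) / (θs + 1) := by
    rw [integral_rpow (Or.inl (by linarith))]
    rw [Real.zero_rpow (by positivity)]
    ring
  -- lower bound
  have hLint : IntervalIntegrable
      (fun z : ℝ => (exp (-(lam * Δ)) * lam ^ θs / Real.Gamma θs) * z ^ (θs - 1)) volume 0 Δ :=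
    base.const_mul _
  have hLval : (∫ z in (0:ℝ)..Δ,
      (exp (-(lam * Δ)) * lam ^ θs / Real.Gamma θs) * z ^ (θs - 1))
      = exp (-(lam * Δ)) * lam ^ θs * Δ ^ θs / (θs * Real.Gamma θs) := by
    rw [intervalIntegral.integral_const_mul, hI0]
    field_simp
  constructor
  · rw [← hLval]
    apply intervalIntegral.integral_mono_on hΔ.le hLint hgint
    intro z hz
    have hz0 : 0 ≤ z := hz.1
    have hzΔ : z ≤ Δ := hz.2
    have hexp : exp (-(lam * Δ)) ≤ exp (-(lam * z)) := by
      apply Real.exp_le_exp.mpr; nlinarith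
    have hc : 0 ≤ lam ^ θs * z ^ (θs - 1) / Real.Gamma θs := by positivity
    calc (exp (-(lam * Δ)) * lam ^ θs / Real.Gamma θs) * z ^ (θs - 1)
        = exp (-(lam * Δ)) * (lam ^ θs * z ^ (θs - 1) / Real.Gamma θs) := by ring
      _ ≤ exp (-(lam * z)) * (lam ^ θs * z ^ (θs - 1) / Real.Gamma θs) :=
          mul_le_mul_of_nonneg_right hexp hc
      _ = exp (-(lam * z)) * lam ^ θs * z ^ (θs - 1) / Real.Gamma θs := by ring
  -- upper bound
  · have hUint : IntervalIntegrable (fun z : ℝ =>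
        (exp (-(lam * Δ)) * lam ^ θs / Real.Gamma θs) * z ^ (θs - 1)
        + (lam * (Δ - z) * lam ^ θs / Real.Gamma θs) * z ^ (θs - 1)) volume 0 Δ := by
      apply hLint.add
      exact base.continuousOn_mul (by fun_prop)
    have hpt : ∀ z ∈ Set.Icc (0:ℝ) Δ,
        exp (-(lam * z)) * lam ^ θs * z ^ (θs - 1) / Real.Gamma θs
        ≤ (exp (-(lam * Δ)) * lam ^ θs / Real.Gamma θs) * z ^ (θs - 1)
          + (lam * (Δ - z) * lam ^ θs / Real.Gamma θs) * z ^ (θs - 1) := by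
      intro z hz
      have hz0 : 0 ≤ z := hz.1
      have hzΔ : z ≤ Δ := hz.2
      have key : exp (-(lam * z)) ≤ exp (-(lam * Δ)) + lam * (Δ - z) := by
        have he : exp (-(lam * Δ)) = exp (-(lam * z)) * exp (-(lam * (Δ - z))) := by
          rw [← Real.exp_add]; ring_nf
        have h1 : exp (-(lam * z)) ≤ 1 := Real.exp_le_one_iff.mpr (by nlinarith)
        have h2 : 1 - lam * (Δ - z) ≤ exp (-(lam * (Δ - z))) := by
          nlinarith [Real.add_one_le_exp (-(lam * (Δ - z)))]
        have h3 : 0 < exp (-(lam * z)) := Real.exp_pos _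
        have h4 : 0 ≤ lam * (Δ - z) := by nlinarith
        nlinarith
      have hc : 0 ≤ lam ^ θs * z ^ (θs - 1) / Real.Gamma θs := by positivity
      calc exp (-(lam * z)) * lam ^ θs * z ^ (θs - 1) / Real.Gamma θs
          = exp (-(lam * z)) * (lam ^ θs * z ^ (θs - 1) / Real.Gamma θs) := by ring
        _ ≤ (exp (-(lam * Δ)) + lam * (Δ - z)) * (lam ^ θs * z ^ (θs - 1) / Real.Gamma θs) :=
            mul_le_mul_of_nonneg_right key hc
        _ = (exp (-(lam * Δ)) * lam ^ θs / Real.Gamma θs) * z ^ (θs - 1)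
            + (lam * (Δ - z) * lam ^ θs / Real.Gamma θs) * z ^ (θs - 1) := by ring
    have hstep := intervalIntegral.integral_mono_on hΔ.le hgint hUint hpt
    refine le_trans hstep (le_of_eq ?_)
    have hsplit : ∀ z ∈ Set.uIcc (0:ℝ) Δ,
        (lam * (Δ - z) * lam ^ θs / Real.Gamma θs) * z ^ (θs - 1)
        = (lam * Δ * lam ^ θs / Real.Gamma θs) * z ^ (θs - 1)
          - (lam * lam ^ θs / Real.Gamma θs) * z ^ θs := by
      intro z hz
      rw [Set.uIcc_of_le hΔ.le] at hz
      rcases eq_or_lt_of_le hz.1 with h | h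
      · rw [← h, Real.zero_rpow (ne_of_gt hθ)]
        ring
      · have : z ^ θs = z ^ (θs - 1) * z := by
          rw [← Real.rpow_add_one (ne_of_gt h)]
          congr 1; ring
        rw [this]; ring
    rw [intervalIntegral.integral_add hLint (base.continuousOn_mul (by fun_prop)), hLval,
      intervalIntegral.integral_congr hsplit,
      intervalIntegral.integral_sub (base.const_mul _)
        ((intervalIntegral.intervalIntegrable_rpow' (by linarith)).const_mul _),
      intervalIntegral.integral_const_mul, intervalIntegral.integral_const_mul, hI0, hI1]
    have hlam1 : lam ^ (θs + 1) = lam ^ θs * lam := Real.rpow_add_one (ne_of_gt hlam) θs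
    have hΔ1 : Δ ^ (θs + 1) = Δ ^ θs * Δ := Real.rpow_add_one (ne_of_gt hΔ) θs
    rw [hlam1, hΔ1]
    field_simp
    ring

/-- Let `Z` be Gamma(θ*, λ) and `D = 1/Z` (so the law of `D` is `ν`, the pushforward of the
Gamma law under `z ↦ z⁻¹`). Then for every `Δ > 0`,
`P(D > 1/Δ) = exp(-λΔ) λ^θ* Δ^θ*/(θ* Γ(θ*)) + R(Δ)` with
`0 ≤ R(Δ) ≤ λ^(θ*+1) Δ^(θ*+1)/(θ*(θ*+1)Γ(θ*))`; in particular
`Δ^(-θ*) P(D > 1/Δ) → λ^θ*/(θ* Γ(θ*))` as `Δ ↓ 0`. -/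
theorem stmt_10 (θs lam : ℝ) (hθ : 0 < θs) (hlam : 0 < lam)
    (μZ : Measure ℝ)
    (hμZ : μZ = MeasureTheory.volume.withDensity fun z =>
      ENNReal.ofReal
        (if 0 < z then exp (-(lam * z)) * lam ^ θs * z ^ (θs - 1) / Real.Gamma θs else 0))
    (ν : Measure ℝ) (hν : ν = Measure.map (fun z : ℝ => z⁻¹) μZ) :
    (∀ Δ : ℝ, 0 < Δ → ∃ R : ℝ,
      (ν (Set.Ioi (1 / Δ))).toReal
          = exp (-(lam * Δ)) * lam ^ θs * Δ ^ θs / (θs * Real.Gamma θs) + R ∧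
        0 ≤ R ∧ R ≤ lam ^ (θs + 1) * Δ ^ (θs + 1) / (θs * (θs + 1) * Real.Gamma θs)) ∧
    Filter.Tendsto (fun Δ : ℝ => (ν (Set.Ioi (1 / Δ))).toReal / Δ ^ θs)
      (nhdsWithin 0 (Set.Ioi 0)) (nhds (lam ^ θs / (θs * Real.Gamma θs))) := by
  have hΓ : 0 < Real.Gamma θs := Real.Gamma_pos_of_pos hθ
  have hP : ∀ Δ : ℝ, 0 < Δ → (ν (Set.Ioi (1 / Δ))).toReal
      = ∫ z in (0:ℝ)..Δ, exp (-(lam * z)) * lam ^ θs * z ^ (θs - 1) / Real.Gamma θs := by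
    intro Δ hΔ
    rw [hν, Measure.map_apply measurable_inv measurableSet_Ioi, aux_preimage Δ hΔ, hμZ,
      aux_val θs lam hθ hlam Δ hΔ]
  constructor
  · intro Δ hΔ
    obtain ⟨hlo, hhi⟩ := aux_bounds θs lam hθ hlam Δ hΔ
    refine ⟨(ν (Set.Ioi (1 / Δ))).toReal
      - exp (-(lam * Δ)) * lam ^ θs * Δ ^ θs / (θs * Real.Gamma θs), by ring, ?_, ?_⟩
    · rw [hP Δ hΔ]; linarith
    · rw [hP Δ hΔ]; linarith
  · have hlim : Filter.Tendsto (fun Δ : ℝ => exp (-(lam * Δ)) * lam ^ θs / (θs * Real.Gamma θs))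
        (nhdsWithin 0 (Set.Ioi 0)) (nhds (lam ^ θs / (θs * Real.Gamma θs))) := by
      have hc : Continuous (fun Δ : ℝ => exp (-(lam * Δ)) * lam ^ θs / (θs * Real.Gamma θs)) := by
        fun_prop
      have := (hc.tendsto 0).mono_left (nhdsWithin_le_nhds (s := Set.Ioi (0:ℝ)))
      simpa using this
    have hlim2 : Filter.Tendsto (fun Δ : ℝ =>
          exp (-(lam * Δ)) * lam ^ θs / (θs * Real.Gamma θs)
          + lam ^ (θs + 1) * Δ / (θs * (θs + 1) * Real.Gamma θs))
        (nhdsWithin 0 (Set.Ioi 0)) (nhds (lam ^ θs / (θs * Real.Gamma θs))) := by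
      have hc : Continuous (fun Δ : ℝ =>
          exp (-(lam * Δ)) * lam ^ θs / (θs * Real.Gamma θs)
          + lam ^ (θs + 1) * Δ / (θs * (θs + 1) * Real.Gamma θs)) := by fun_prop
      have := (hc.tendsto 0).mono_left (nhdsWithin_le_nhds (s := Set.Ioi (0:ℝ)))
      simpa using this
    apply tendsto_of_tendsto_of_tendsto_of_le_of_le' hlim hlim2
    · filter_upwards [self_mem_nhdsWithin] with Δ hΔ
      have hΔ : (0:ℝ) < Δ := hΔ
      have hpow : 0 < Δ ^ θs := Real.rpow_pos_of_pos hΔ θs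
      obtain ⟨hlo, _⟩ := aux_bounds θs lam hθ hlam Δ hΔ
      rw [hP Δ hΔ, le_div_iff₀ hpow]
      refine le_trans (le_of_eq ?_) hlo
      ring
    · filter_upwards [self_mem_nhdsWithin] with Δ hΔ
      have hΔ : (0:ℝ) < Δ := hΔ
      have hpow : 0 < Δ ^ θs := Real.rpow_pos_of_pos hΔ θs
      obtain ⟨_, hhi⟩ := aux_bounds θs lam hθ hlam Δ hΔ
      rw [hP Δ hΔ]
      rw [div_le_iff₀ hpow]
      refine le_trans hhi (le_of_eq ?_)
      have hΔ1 : Δ ^ (θs + 1) = Δ ^ θs * Δ := Real.rpow_add_one (ne_of_gt hΔ) θs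
      rw [hΔ1]
      field_simp
end

section
/- Lyapunov inequality for importance sampling (Lemma 1 / LemLI): Let (W_n)_{n≥0} be a time-homogeneous Markov chain on a measurable space E with transition kernel Q, let A ⊆ E be a measurable target set, T = inf{n ≥ 0 : W_n ∈ A}, and let r : E×E → (0,∞) be measurable. Suppose h : E → [0,∞) is measurable, satisfies E_w[r(w,W_1) h(W_1)] ≤ h(w) for every w ∉ A, and h(w) ≥ 1 for every w ∈ A. Then for every w ∈ E, E_w[ (∏_{k=0}^{T−1} r(W_k, W_{k+1})) · 1(T < ∞) ] ≤ h(w). -/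
open MeasureTheory ProbabilityTheory Real
open scoped ENNReal NNReal


private lemma markov2
    {E : Type} [MeasurableSpace E]
    {Ω : Type} [MeasurableSpace Ω] (P : Measure Ω) [IsProbabilityMeasure P]
    (Q : Kernel E E) [IsMarkovKernel Q]
    (W : ℕ → Ω → E) (hWmeas : ∀ n, Measurable (W n))
    (hMarkov : ∀ (n : ℕ) (f : (Fin (n + 1) → E) → ℝ≥0∞), Measurable f →
      ∀ g : E → ℝ≥0∞, Measurable g →
        ∫⁻ ω, f (fun i => W i.val ω) * g (W (n + 1) ω) ∂P
          = ∫⁻ ω, f (fun i => W i.val ω) * ∫⁻ y, g y ∂(Q (W n ω)) ∂P)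
    (n : ℕ) (φ : E × E → ℝ≥0∞) (hφ : Measurable φ)
    (f : (Fin (n + 1) → E) → ℝ≥0∞) (hf : Measurable f) :
    ∫⁻ ω, f (fun i => W i.val ω) * φ (W n ω, W (n + 1) ω) ∂P
      = ∫⁻ ω, f (fun i => W i.val ω) * ∫⁻ y, φ (W n ω, y) ∂(Q (W n ω)) ∂P := by
  have hpair : Measurable fun ω => (W n ω, W (n + 1) ω) :=
    (hWmeas n).prodMk (hWmeas (n + 1))
  have hinner : Measurable fun x => ∫⁻ y, φ (x, y) ∂(Q x) :=
    Measurable.lintegral_kernel_prod_right (f := fun x y => φ (x, y)) (by exact hφ)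
  -- bounded case
  have bdd : ∀ (m : ℝ≥0∞), m ≠ ⊤ → ∀ (f : (Fin (n + 1) → E) → ℝ≥0∞), Measurable f →
      (∀ v, f v ≤ m) →
      ∫⁻ ω, f (fun i => W i.val ω) * φ (W n ω, W (n + 1) ω) ∂P
        = ∫⁻ ω, f (fun i => W i.val ω) * ∫⁻ y, φ (W n ω, y) ∂(Q (W n ω)) ∂P := by
    intro m hm f hf hfm
    set F := fun ω => f (fun i : Fin (n + 1) => W i.val ω) with hFdef
    have hF : Measurable F := hf.comp (measurable_pi_lambda _ fun i => hWmeas i)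
    set ν := P.withDensity F with hν
    haveI : IsFiniteMeasure ν := by
      constructor
      rw [hν, withDensity_apply _ MeasurableSet.univ, setLIntegral_univ]
      have : ∫⁻ ω, F ω ∂P ≤ m := le_trans (lintegral_mono fun ω => hfm _) (by simp)
      exact lt_of_le_of_lt this hm.lt_top
    haveI : IsFiniteMeasure (ν.map (W n)) :=
      ⟨by rw [Measure.map_apply (hWmeas n) MeasurableSet.univ]; simpa using measure_lt_top ν _⟩
    set μ₁ := ν.map (fun ω => (W n ω, W (n + 1) ω)) with hμ₁
    set μ₂ := Measure.compProd (ν.map (W n)) Q with hμ₂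
    haveI : IsFiniteMeasure μ₁ :=
      ⟨by rw [hμ₁, Measure.map_apply hpair MeasurableSet.univ]; simpa using measure_lt_top ν _⟩
    have hμ : μ₁ = μ₂ := by
      refine ext_of_generate_finite _ generateFrom_prod.symm isPiSystem_prod ?_ ?_
      · rintro s ⟨B, hB, C, hC, rfl⟩
        have hB : MeasurableSet B := hB
        have hC : MeasurableSet C := hC
        have hBC : MeasurableSet (B ×ˢ C) := hB.prod hC
        have hL : μ₁ (B ×ˢ C)
            = ∫⁻ ω, (f (fun i => W i.val ω) * B.indicator 1 (W n ω))
                * C.indicator 1 (W (n + 1) ω) ∂P := by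
          rw [hμ₁, Measure.map_apply hpair hBC, hν, withDensity_apply _ (hpair hBC),
            ← lintegral_indicator (hpair hBC)]
          refine lintegral_congr fun ω => ?_
          by_cases h1 : W n ω ∈ B <;> by_cases h2 : W (n + 1) ω ∈ C <;>
            simp [Set.indicator_apply, h1, h2, Set.mem_prod, hFdef]
        have hgB : Measurable (B.indicator (1 : E → ℝ≥0∞)) := measurable_one.indicator hB
        have hgC : Measurable (C.indicator (1 : E → ℝ≥0∞)) := measurable_one.indicator hC
        have hR : μ₂ (B ×ˢ C)
            = ∫⁻ ω, (f (fun i => W i.val ω) * B.indicator 1 (W n ω)) * Q (W n ω) C ∂P := by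
          rw [hμ₂, Measure.compProd_apply hBC]
          have hsec : ∀ x : E, Q x (Prod.mk x ⁻¹' (B ×ˢ C)) = B.indicator 1 x * Q x C := by
            intro x
            by_cases hx : x ∈ B
            · simp [Set.indicator_of_mem hx,
                show Prod.mk x ⁻¹' (B ×ˢ C) = C from by ext y; simp [hx]]
            · simp [Set.indicator_of_notMem hx,
                show Prod.mk x ⁻¹' (B ×ˢ C) = ∅ from by ext y; simp [hx]]
          rw [lintegral_congr hsec,
            lintegral_map (f := fun x => B.indicator 1 x * Q x C) (hgB.mul (Kernel.measurable_coe Q hC)) (hWmeas n), hν,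
            lintegral_withDensity_eq_lintegral_mul _ hF
              (show Measurable fun ω => B.indicator 1 (W n ω) * Q (W n ω) C from
                (hgB.mul (Kernel.measurable_coe Q hC)).comp (hWmeas n))]
          exact lintegral_congr fun ω => by simp [hFdef, mul_assoc]
        have hfB : Measurable fun v : Fin (n + 1) → E => f v * B.indicator 1 (v (Fin.last n)) :=
          hf.mul (hgB.comp (measurable_pi_apply _))
        have hM := hMarkov n (fun v => f v * B.indicator 1 (v (Fin.last n))) hfB
          (C.indicator 1) hgC
        rw [hL, hR]
        simpa [Fin.val_last, lintegral_indicator_one hC] using hM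
      · have h1 : μ₁ Set.univ = ν Set.univ := by
          rw [hμ₁, Measure.map_apply hpair MeasurableSet.univ]; simp
        have h2 : μ₂ Set.univ = ν Set.univ := by
          rw [hμ₂, Measure.compProd_apply MeasurableSet.univ]
          simp [lintegral_one, Measure.map_apply (hWmeas n) MeasurableSet.univ]
        rw [h1, h2]
    have e1 : ∫⁻ p, φ p ∂μ₁ = ∫⁻ ω, F ω * φ (W n ω, W (n + 1) ω) ∂P := by
      rw [hμ₁, lintegral_map hφ hpair, hν,
        lintegral_withDensity_eq_lintegral_mul _ hF
          (show Measurable fun ω => φ (W n ω, W (n + 1) ω) from hφ.comp hpair)]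
      rfl
    have e2 : ∫⁻ p, φ p ∂μ₂ = ∫⁻ ω, F ω * ∫⁻ y, φ (W n ω, y) ∂(Q (W n ω)) ∂P := by
      rw [hμ₂, Measure.lintegral_compProd hφ, lintegral_map hinner (hWmeas n), hν,
        lintegral_withDensity_eq_lintegral_mul _ hF
          (show Measurable fun ω => ∫⁻ y, φ (W n ω, y) ∂(Q (W n ω)) from hinner.comp (hWmeas n))]
      rfl
    rw [← e1, ← e2, hμ]
  -- general case by truncation
  set F := fun ω => f (fun i : Fin (n + 1) => W i.val ω) with hFdef
  have hF : Measurable F := hf.comp (measurable_pi_lambda _ fun i => hWmeas i)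
  have hsup : ∀ x : ℝ≥0∞, ⨆ m : ℕ, min x (m : ℝ≥0∞) = x := by
    intro x
    obtain hx | hx := eq_or_ne x ⊤
    · subst hx
      rw [iSup_congr fun m : ℕ => min_eq_right (le_top : (m : ℝ≥0∞) ≤ ⊤)]
      exact ENNReal.iSup_natCast
    · obtain ⟨m, hm⟩ := ENNReal.exists_nat_gt hx
      exact le_antisymm (iSup_le fun k => min_le_left _ _)
        (le_iSup_of_le m (by rw [min_eq_left hm.le]))
  have hmono : ∀ (G : Ω → ℝ≥0∞), Monotone fun (m : ℕ) (ω : Ω) => min (F ω) m * G ω := by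
    intro G a b hab ω
    exact mul_le_mul_left (min_le_min le_rfl (by exact_mod_cast hab)) _
  have hinnW : Measurable fun ω => ∫⁻ y, φ (W n ω, y) ∂(Q (W n ω)) := hinner.comp (hWmeas n)
  calc ∫⁻ ω, F ω * φ (W n ω, W (n + 1) ω) ∂P
      = ∫⁻ ω, ⨆ m : ℕ, min (F ω) m * φ (W n ω, W (n + 1) ω) ∂P := by
        refine lintegral_congr fun ω => ?_
        conv_lhs => rw [← hsup (F ω)]
        rw [ENNReal.iSup_mul]
    _ = ⨆ m : ℕ, ∫⁻ ω, min (F ω) m * φ (W n ω, W (n + 1) ω) ∂P :=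
        lintegral_iSup (fun m => (hF.min measurable_const).mul (hφ.comp hpair)) (hmono _)
    _ = ⨆ m : ℕ, ∫⁻ ω, min (F ω) m * ∫⁻ y, φ (W n ω, y) ∂(Q (W n ω)) ∂P :=
        iSup_congr fun m => bdd m (by simp) (fun v => min (f v) m)
          (hf.min measurable_const) (fun v => min_le_right _ _)
    _ = ∫⁻ ω, ⨆ m : ℕ, min (F ω) m * ∫⁻ y, φ (W n ω, y) ∂(Q (W n ω)) ∂P :=
        (lintegral_iSup (fun m => (hF.min measurable_const).mul hinnW) (hmono _)).symm
    _ = ∫⁻ ω, F ω * ∫⁻ y, φ (W n ω, y) ∂(Q (W n ω)) ∂P := by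
        refine lintegral_congr fun ω => ?_
        conv_rhs => rw [← hsup (F ω)]
        rw [ENNReal.iSup_mul]

/-- Lyapunov inequality for importance sampling. `(W_n)` is a Markov chain on `E` with
transition kernel `Q` started at `w`, `A` is the target set, `T = inf{n : W_n ∈ A}`, and
`r : E × E → (0,∞)` is a per-step likelihood ratio. If `h ≥ 0` satisfies the Lyapunov
inequality `E_w[r(w, W₁) h(W₁)] ≤ h(w)` off `A` and `h ≥ 1` on `A`, then
`E_w[(∏_{k<T} r(W_k, W_{k+1})) 1(T < ∞)] ≤ h(w)`. -/
theorem stmt_12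
    {E : Type} [MeasurableSpace E]
    {Ω : Type} [MeasurableSpace Ω] (P : Measure Ω) [IsProbabilityMeasure P]
    (Q : Kernel E E) [IsMarkovKernel Q]
    (W : ℕ → Ω → E) (hWmeas : ∀ n, Measurable (W n))
    (w : E) (hW0 : ∀ᵐ ω ∂P, W 0 ω = w)
    (hMarkov : ∀ (n : ℕ) (f : (Fin (n + 1) → E) → ℝ≥0∞), Measurable f →
      ∀ g : E → ℝ≥0∞, Measurable g →
        ∫⁻ ω, f (fun i => W i.val ω) * g (W (n + 1) ω) ∂P
          = ∫⁻ ω, f (fun i => W i.val ω) * ∫⁻ y, g y ∂(Q (W n ω)) ∂P)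
    (A : Set E) (hA : MeasurableSet A)
    (r : E → E → ℝ) (hrmeas : Measurable fun p : E × E => r p.1 p.2)
    (hrpos : ∀ a b, 0 < r a b)
    (h : E → ℝ) (hhmeas : Measurable h) (hhnn : ∀ a, 0 ≤ h a)
    (hLI : ∀ a ∉ A, ∫⁻ y, ENNReal.ofReal (r a y * h y) ∂(Q a) ≤ ENNReal.ofReal (h a))
    (hbdy : ∀ a ∈ A, 1 ≤ h a) :
    ∫⁻ ω in {ω | ∃ n, W n ω ∈ A},
        ENNReal.ofReal
          (∏ k ∈ Finset.range (sInf {n | W n ω ∈ A}), r (W k ω) (W (k + 1) ω)) ∂P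
      ≤ ENNReal.ofReal (h w) := by
  classical
  set Rf : ℕ → Ω → ℝ≥0∞ := fun k ω => ENNReal.ofReal (r (W k ω) (W (k + 1) ω)) with hRf
  set Pp : ℕ → Ω → ℝ≥0∞ := fun t ω => ∏ k ∈ Finset.range t, Rf k ω with hPp
  set H : ℕ → Ω → ℝ≥0∞ := fun t ω => ENNReal.ofReal (h (W t ω)) with hHdef
  set Cset : ℕ → Set Ω := fun n => {ω | ∀ k < n, W k ω ∉ A} with hCset
  set Efst : ℕ → Set Ω := fun t => (W t ⁻¹' A) ∩ Cset t with hEfst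
  have hRfm : ∀ k, Measurable (Rf k) := fun k =>
    ENNReal.measurable_ofReal.comp (hrmeas.comp ((hWmeas k).prodMk (hWmeas (k + 1))))
  have hPpm : ∀ t, Measurable (Pp t) := fun t => Finset.measurable_prod _ fun k _ => hRfm k
  have hHm : ∀ t, Measurable (H t) := fun t =>
    ENNReal.measurable_ofReal.comp (hhmeas.comp (hWmeas t))
  have hCm : ∀ n, MeasurableSet (Cset n) := by
    intro n
    have : Cset n = ⋂ k, ⋂ _ : k < n, W k ⁻¹' Aᶜ := by ext ω; simp [hCset]
    rw [this]
    exact MeasurableSet.iInter fun k => MeasurableSet.iInter fun _ => (hWmeas k) hA.compl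
  have hEm : ∀ t, MeasurableSet (Efst t) := fun t => ((hWmeas t) hA).inter (hCm t)
  set S : ℕ → Ω → ℝ≥0∞ := fun n ω =>
    (∑ t ∈ Finset.range n, (Efst t).indicator 1 ω * (Pp t ω * H t ω))
      + (Cset n).indicator 1 ω * (Pp n ω * H n ω) with hS
  -- value of S 0
  have hS0 : ∫⁻ ω, S 0 ω ∂P = ENNReal.ofReal (h w) := by
    have hval : ∀ ω, S 0 ω = H 0 ω := by
      intro ω
      have hmem : ω ∈ Cset 0 := by simp [hCset]
      simp [hS, Set.indicator_of_mem hmem, hPp]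
    rw [lintegral_congr hval]
    calc ∫⁻ ω, H 0 ω ∂P = ∫⁻ _, ENNReal.ofReal (h w) ∂P := by
          refine lintegral_congr_ae ?_
          filter_upwards [hW0] with ω hω
          rw [hHdef]; simp [hω]
      _ = ENNReal.ofReal (h w) := by simp
  -- one-step supermartingale inequality
  have key : ∀ n, ∫⁻ ω, S (n + 1) ω ∂P ≤ ∫⁻ ω, S n ω ∂P := by
    intro n
    set X : Ω → ℝ≥0∞ := fun ω =>
      (∑ t ∈ Finset.range n, (Efst t).indicator 1 ω * (Pp t ω * H t ω))
        + (Efst n).indicator 1 ω * (Pp n ω * H n ω) with hX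
    have hXm : Measurable X :=
      (Finset.measurable_sum _ fun t _ => (measurable_one.indicator (hEm t)).mul
        ((hPpm t).mul (hHm t))).add
        ((measurable_one.indicator (hEm n)).mul ((hPpm n).mul (hHm n)))
    have hdecompS1 : ∀ ω, S (n + 1) ω
        = X ω + (Cset (n + 1)).indicator 1 ω * (Pp (n + 1) ω * H (n + 1) ω) := by
      intro ω
      rw [hS, hX]; simp only
      rw [Finset.sum_range_succ]
    have hsplitind : ∀ ω, (Cset n).indicator (1 : Ω → ℝ≥0∞) ω
        = (Efst n).indicator 1 ω + (Cset (n + 1)).indicator 1 ω := by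
      intro ω
      by_cases hc : ω ∈ Cset n
      · by_cases ha : W n ω ∈ A
        · have h1 : ω ∈ Efst n := ⟨ha, hc⟩
          have h2 : ω ∉ Cset (n + 1) := by
            intro hmem
            exact hmem n (Nat.lt_succ_self n) ha
          simp [Set.indicator_of_mem hc, Set.indicator_of_mem h1,
            Set.indicator_of_notMem h2]
        · have h1 : ω ∉ Efst n := fun hmem => ha hmem.1
          have h2 : ω ∈ Cset (n + 1) := by
            intro k hk
            rcases Nat.lt_succ_iff_lt_or_eq.mp hk with hk' | rfl
            · exact hc k hk'
            · exact ha
          simp [Set.indicator_of_mem hc, Set.indicator_of_notMem h1,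
            Set.indicator_of_mem h2]
      · have h1 : ω ∉ Efst n := fun hmem => hc hmem.2
        have h2 : ω ∉ Cset (n + 1) :=
          fun hmem => hc fun k hk => hmem k (hk.trans (Nat.lt_succ_self n))
        simp [Set.indicator_of_notMem hc, Set.indicator_of_notMem h1,
          Set.indicator_of_notMem h2]
    have hdecompS : ∀ ω, S n ω
        = X ω + (Cset (n + 1)).indicator 1 ω * (Pp n ω * H n ω) := by
      intro ω
      rw [hS, hX]; simp only
      rw [hsplitind ω, add_mul]
      ring
    rw [lintegral_congr hdecompS1, lintegral_congr hdecompS,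
      lintegral_add_left hXm, lintegral_add_left hXm]
    refine add_le_add le_rfl ?_
    set φ : E × E → ℝ≥0∞ := fun p => ENNReal.ofReal (r p.1 p.2 * h p.2) with hφdef
    have hφ : Measurable φ :=
      ENNReal.measurable_ofReal.comp (hrmeas.mul (hhmeas.comp measurable_snd))
    set f : (Fin (n + 1) → E) → ℝ≥0∞ := fun v =>
      ({v' : Fin (n + 1) → E | ∀ i, v' i ∉ A}).indicator 1 v
        * ∏ k : Fin n, ENNReal.ofReal (r (v k.castSucc) (v k.succ)) with hfdef
    have hfm : Measurable f := by
      have h1 : MeasurableSet {v' : Fin (n + 1) → E | ∀ i, v' i ∉ A} := by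
        have : {v' : Fin (n + 1) → E | ∀ i, v' i ∉ A} = ⋂ i, (fun v' => v' i) ⁻¹' Aᶜ := by
          ext v'; simp
        rw [this]
        exact MeasurableSet.iInter fun i => (measurable_pi_apply i) hA.compl
      have h2 : ∀ k : Fin n, Measurable fun v : Fin (n + 1) → E => (v k.castSucc, v k.succ) :=
        fun k => (measurable_pi_apply k.castSucc).prodMk (measurable_pi_apply k.succ)
      exact (measurable_one.indicator h1).mul (Finset.measurable_prod _ fun k _ =>
        ENNReal.measurable_ofReal.comp (hrmeas.comp (h2 k)))
    have hind : ∀ ω : Ω,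
        ({v' : Fin (n + 1) → E | ∀ i, v' i ∉ A}).indicator (1 : (Fin (n + 1) → E) → ℝ≥0∞)
          (fun i => W i.val ω) = (Cset (n + 1)).indicator 1 ω := by
      intro ω
      by_cases hc : ω ∈ Cset (n + 1)
      · rw [Set.indicator_of_mem hc, Set.indicator_of_mem
          (show (fun i => W i.val ω) ∈ {v' : Fin (n + 1) → E | ∀ i, v' i ∉ A} from
            fun i => hc i.val i.isLt)]
        simp
      · rw [Set.indicator_of_notMem hc, Set.indicator_of_notMem
          (show (fun i => W i.val ω) ∉ {v' : Fin (n + 1) → E | ∀ i, v' i ∉ A} from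
            fun hmem => hc fun k hk => hmem ⟨k, hk⟩)]
    have hprodW : ∀ ω : Ω,
        (∏ k : Fin n, ENNReal.ofReal
          (r (W (k.castSucc).val ω) (W (k.succ).val ω))) = Pp n ω := by
      intro ω
      rw [hPp]; simp only
      rw [← Fin.prod_univ_eq_prod_range (fun k => Rf k ω) n]
      exact Finset.prod_congr rfl fun k _ => by simp [hRf]
    have hclaim1 : ∀ ω, f (fun i => W i.val ω) * φ (W n ω, W (n + 1) ω)
        = (Cset (n + 1)).indicator 1 ω * (Pp (n + 1) ω * H (n + 1) ω) := by
      intro ω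
      rw [hfdef]; simp only
      rw [hind ω, hprodW ω, hφdef]; simp only
      rw [ENNReal.ofReal_mul (hrpos _ _).le]
      have hP1 : Pp (n + 1) ω = Pp n ω * Rf n ω := by
        rw [hPp]; simp only [Finset.prod_range_succ]
      rw [hP1, hHdef, hRf]
      ring
    have hclaim2 : ∀ ω, f (fun i => W i.val ω) * ∫⁻ y, φ (W n ω, y) ∂(Q (W n ω))
        ≤ (Cset (n + 1)).indicator 1 ω * (Pp n ω * H n ω) := by
      intro ω
      rw [hfdef]; simp only
      rw [hind ω, hprodW ω]
      by_cases hc : ω ∈ Cset (n + 1)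
      · have hnA : W n ω ∉ A := hc n (Nat.lt_succ_self n)
        have hle : ∫⁻ y, φ (W n ω, y) ∂(Q (W n ω)) ≤ H n ω := by
          rw [hφdef, hHdef]; exact hLI _ hnA
        rw [Set.indicator_of_mem hc]
        simp only [Pi.one_apply, one_mul]
        exact mul_le_mul_right hle _
      · rw [Set.indicator_of_notMem hc]
        simp
    calc ∫⁻ ω, (Cset (n + 1)).indicator 1 ω * (Pp (n + 1) ω * H (n + 1) ω) ∂P
        = ∫⁻ ω, f (fun i => W i.val ω) * φ (W n ω, W (n + 1) ω) ∂P :=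
          (lintegral_congr hclaim1).symm
      _ = ∫⁻ ω, f (fun i => W i.val ω) * ∫⁻ y, φ (W n ω, y) ∂(Q (W n ω)) ∂P :=
          markov2 P Q W hWmeas hMarkov n φ hφ f hfm
      _ ≤ ∫⁻ ω, (Cset (n + 1)).indicator 1 ω * (Pp n ω * H n ω) ∂P :=
          lintegral_mono hclaim2
  have hchain : ∀ n, ∫⁻ ω, S n ω ∂P ≤ ENNReal.ofReal (h w) := by
    intro n
    induction n with
    | zero => exact le_of_eq hS0
    | succ k ih => exact (key k).trans ih
  set G : ℕ → Ω → ℝ≥0∞ := fun n ω =>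
    ∑ t ∈ Finset.range (n + 1), (Efst t).indicator 1 ω * Pp t ω with hG
  have hGm : ∀ n, Measurable (G n) := fun n =>
    Finset.measurable_sum _ fun t _ => (measurable_one.indicator (hEm t)).mul (hPpm t)
  have hGmono : Monotone G := fun a b hab ω =>
    Finset.sum_le_sum_of_subset (Finset.range_subset_range.mpr (by omega))
  have hGle : ∀ n, ∫⁻ ω, G n ω ∂P ≤ ENNReal.ofReal (h w) := by
    intro n
    refine le_trans (lintegral_mono fun ω => ?_) (hchain (n + 1))
    rw [hS]; simp only
    refine le_trans ?_ le_self_add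
    rw [hG]; simp only
    refine Finset.sum_le_sum fun t _ => ?_
    by_cases ht : ω ∈ Efst t
    · have h1 : (1 : ℝ≥0∞) ≤ H t ω := by
        rw [hHdef]
        exact ENNReal.one_le_ofReal.mpr (hbdy _ ht.1)
      exact mul_le_mul_right (le_mul_of_one_le_right' h1) _
    · simp [Set.indicator_of_notMem ht]
  have hhit : MeasurableSet {ω | ∃ n, W n ω ∈ A} := by
    have : {ω | ∃ n, W n ω ∈ A} = ⋃ n, W n ⁻¹' A := by ext ω; simp
    rw [this]
    exact MeasurableSet.iUnion fun n => (hWmeas n) hA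
  rw [← lintegral_indicator hhit]
  have hptwise : ∀ ω, ({ω | ∃ n, W n ω ∈ A}).indicator
      (fun ω => ENNReal.ofReal
        (∏ k ∈ Finset.range (sInf {n | W n ω ∈ A}), r (W k ω) (W (k + 1) ω))) ω
      = ⨆ n, G n ω := by
    intro ω
    by_cases hex : ∃ n, W n ω ∈ A
    · rw [Set.indicator_of_mem (show ω ∈ {ω | ∃ n, W n ω ∈ A} from hex)]
      set t := sInf {n | W n ω ∈ A} with htdef
      have htA : W t ω ∈ A := Nat.sInf_mem hex
      have htmin : ∀ k < t, W k ω ∉ A := fun k hk => Nat.notMem_of_lt_sInf hk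
      have hEt : ω ∈ Efst t := ⟨htA, htmin⟩
      have hofr : ENNReal.ofReal (∏ k ∈ Finset.range t, r (W k ω) (W (k + 1) ω))
          = Pp t ω := by
        rw [ENNReal.ofReal_prod_of_nonneg (fun k _ => (hrpos _ _).le), hPp]
      rw [hofr]
      have hGval : ∀ n, t ≤ n → G n ω = Pp t ω := by
        intro n hn
        rw [hG]; simp only
        rw [Finset.sum_eq_single t]
        · rw [Set.indicator_of_mem hEt]; simp
        · intro s hs hst
          have hns : ω ∉ Efst s := by
            intro hmem
            rcases lt_or_gt_of_ne hst with h' | h'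
            · exact htmin s h' hmem.1
            · exact hmem.2 t h' htA
          simp [Set.indicator_of_notMem hns]
        · intro habs
          exact absurd (Finset.mem_range.mpr (by omega)) habs
      refine le_antisymm ?_ ?_
      · rw [← hGval t le_rfl]
        exact le_iSup (fun n => G n ω) t
      · refine iSup_le fun n => ?_
        rcases le_total t n with hn | hn
        · exact le_of_eq (hGval n hn)
        · exact le_of_le_of_eq (hGmono hn ω) (hGval t le_rfl)
    · rw [Set.indicator_of_notMem (show ω ∉ {ω | ∃ n, W n ω ∈ A} from hex)]
      push_neg at hex
      symm
      rw [ENNReal.iSup_eq_zero]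
      intro n
      rw [hG]; simp only
      refine Finset.sum_eq_zero fun s _ => ?_
      have hns : ω ∉ Efst s := fun hm => hex s hm.1
      simp [Set.indicator_of_notMem hns]
  rw [lintegral_congr hptwise, lintegral_iSup hGm hGmono]
  exact iSup_le hGle
end
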